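/- arXiv:2106.00513 — 6 statements merged into one kernel-verified Lean document; each statement's English description precedes it below -/
import Mathlib

section
/- If a finite cubic (3-regular) simple graph G admitting a perfect matching has the PMH-property, then every 2-factor of G contains only cycles of even length (i.e., G is E2F). -/
open SimpleGraph

namespace PMHE2F
variable {V : Type*} {G : SimpleGraph V}

lemma support_getElem {u w : V} (p : G.Walk u w) (i : ℕ) (h : i < p.support.length) :
    p.support[i] = p.getVert i := by
  induction p generalizing i with
  | nil => simp at h; simp [h]
  | cons h q ih =>
    match i with
    | 0 => simp [Walk.getVert_zero]
    | (i+1) =>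
      simp only [Walk.support_cons, List.getElem_cons_succ, Walk.getVert_cons_succ]
      exact ih i (by simpa using h)

lemma firstEdge_mem {u w : V} {p : G.Walk u w} (hp : ¬p.Nil) :
    s(u, p.getVert 1) ∈ p.edges := by
  cases p with
  | nil => simp at hp
  | cons h q => simp [Walk.edges_cons, Walk.getVert_cons_succ, Walk.getVert_zero]

lemma lastEdge_mem {u w : V} {p : G.Walk u w} (hp : ¬p.Nil) :
    s(p.getVert (p.length - 1), w) ∈ p.edges := by
  have hrev : ¬p.reverse.Nil := by
    rw [Walk.nil_reverse]; exact hp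
  have := firstEdge_mem hrev
  rw [Walk.edges_reverse, List.mem_reverse, Walk.getVert_reverse] at this
  simpa [Sym2.eq_swap] using this

lemma cycle_first_ne_last {u : V} {d : G.Walk u u} (hd : d.IsCycle) :
    s(u, d.getVert 1) ≠ s(d.getVert (d.length - 1), u) := by
  have h3 : 3 ≤ d.length := hd.three_le_length
  have hne : u ≠ d.getVert 1 := by
    have := d.adj_getVert_succ (i := 0) (by omega)
    simpa [Walk.getVert_zero] using this.ne
  intro heq
  rw [Sym2.eq_iff] at heq
  rcases heq with ⟨h1, h2⟩ | ⟨h1, h2⟩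
  · -- u = getVert (n-1), getVert 1 = u impossible? second says getVert 1 = u
    exact hne h2.symm
  · -- u = u, getVert 1 = getVert (n-1)
    have hlen : d.support.length = d.length + 1 := Walk.length_support d
    have htail : d.support.tail.length = d.length := by simp [hlen]
    have h0 : d.support.tail[0]'(by omega) = d.getVert 1 := by
      rw [List.getElem_tail]; exact support_getElem d 1 (by omega)
    have hn : d.support.tail[d.length - 2]'(by omega) = d.getVert (d.length - 1) := by
      rw [List.getElem_tail, support_getElem d _ (by omega)]
      congr 1
      omega
    have h02 : (0 : ℕ) = d.length - 2 :=
      hd.support_nodup.getElem_inj_iff.mp (h0.trans (h2.trans hn.symm))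
    omega

lemma walk_alt {F N : Set (Sym2 V)}
    (Hkey : ∀ (v : V) (e e' : Sym2 V), e ≠ e' → v ∈ e → v ∈ e' → e ∈ F → e' ∈ F →
      (e ∈ N ↔ e' ∉ N)) :
    ∀ {u w : V} (p : G.Walk u w), ¬p.Nil → (∀ e ∈ p.edges, e ∈ F) → p.edges.Nodup →
      (s(u, p.getVert 1) ∈ N ↔ (s(p.getVert (p.length - 1), w) ∈ N ↔ Odd p.length)) := by
  intro u w p
  induction p with
  | nil => intro h; simp at h
  | @cons a b c h q ih =>
    intro _ hF hnd
    cases q with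
    | nil =>
      simp only [Walk.length_cons, Walk.length_nil, Walk.getVert_cons_succ,
        Walk.getVert_zero, Nat.zero_add, Nat.sub_self]
      simp [Nat.odd_iff]
    | cons h' q' =>
      set q : G.Walk _ _ := Walk.cons h' q' with hq
      have hqnil : ¬q.Nil := by simp [hq]
      have hqF : ∀ e ∈ q.edges, e ∈ F := fun e he => hF e (by simp [Walk.edges_cons, he])
      have hqnd : q.edges.Nodup := (List.nodup_cons.mp (by simpa [Walk.edges_cons] using hnd)).2
      have hnotmem : s(_, _) ∉ q.edges := (List.nodup_cons.mp (by simpa [Walk.edges_cons] using hnd)).1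
      have IH := ih hqnil hqF hqnd
      have hfirstq : s(_, q.getVert 1) ∈ q.edges := firstEdge_mem hqnil
      have hkey := Hkey b s(a, b) s(b, q.getVert 1)
        (fun hcontra => hnotmem (hcontra ▸ hfirstq))
        (by simp) (by simp)
        (hF _ (by simp [Walk.edges_cons]))
        (hF _ (by simp [Walk.edges_cons, hfirstq]))
      have hgv1 : (Walk.cons h q).getVert 1 = b := by
        rw [Walk.getVert_cons_succ, Walk.getVert_zero]
      have hlen : (Walk.cons h q).length = q.length + 1 := Walk.length_cons _ _
      have hql : 1 ≤ q.length := by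
        rw [hq]; simp [Walk.length_cons]
      have hgvlast : (Walk.cons h q).getVert ((Walk.cons h q).length - 1)
          = q.getVert (q.length - 1) := by
        rw [hlen]
        have h1 : q.length + 1 - 1 = (q.length - 1) + 1 := by omega
        rw [h1, Walk.getVert_cons_succ]
      rw [hgv1, hgvlast, hlen]
      have hodd : Odd (q.length + 1) ↔ ¬ Odd q.length := by
        rw [Nat.odd_add_one, Nat.not_odd_iff_even]
      rw [hodd]
      tauto
end PMHE2F

open PMHE2F


/-- `M` is a perfect matching of `G`, viewed as a set of edges: every vertex lies on
exactly one edge of `M`. -/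
def IsPerfMatching {V : Type*} (G : SimpleGraph V) (M : Set (Sym2 V)) : Prop :=
  M ⊆ G.edgeSet ∧ ∀ v : V, ∃! e, e ∈ M ∧ v ∈ e

/-- `F` is (the edge set of) a 2-factor of `G`: a spanning subgraph in which every
vertex is incident with exactly two edges of `F`. -/
def Is2Factor {V : Type*} (G : SimpleGraph V) (F : Set (Sym2 V)) : Prop :=
  F ⊆ G.edgeSet ∧ ∀ v : V, ∃ e₁ e₂, e₁ ≠ e₂ ∧ e₁ ∈ F ∧ e₂ ∈ F ∧ v ∈ e₁ ∧ v ∈ e₂ ∧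
    ∀ e ∈ F, v ∈ e → e = e₁ ∨ e = e₂

/-- Every cycle of `G` all of whose edges lie in `F` has even length. -/
def HasOnlyEvenCycles {V : Type*} (G : SimpleGraph V) (F : Set (Sym2 V)) : Prop :=
  ∀ (x : V) (c : G.Walk x x), c.IsCycle → (∀ e ∈ c.edges, e ∈ F) → Even c.length

/-- `G` is even-2-factorable: every 2-factor of `G` contains only even cycles. -/
def IsE2F {V : Type*} (G : SimpleGraph V) : Prop :=
  ∀ F, Is2Factor G F → HasOnlyEvenCycles G F

/-- `S` is the edge set of a Hamiltonian cycle of `G`. -/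
def IsHamCycleSet {V : Type*} [DecidableEq V] (G : SimpleGraph V) (S : Set (Sym2 V)) : Prop :=
  ∃ (x : V) (c : G.Walk x x), c.IsHamiltonianCycle ∧ S = {e | e ∈ c.edges}

/-- `G` has the Perfect-Matching-Hamiltonian property. -/
def HasPMH {V : Type*} [DecidableEq V] (G : SimpleGraph V) : Prop :=
  ∀ M, IsPerfMatching G M → ∃ N, IsPerfMatching G N ∧ IsHamCycleSet G (M ∪ N)

/-- If a finite cubic simple graph `G` admitting a perfect matching has the PMH-property,
then every 2-factor of `G` contains only cycles of even length, i.e. `G` is E2F. -/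
theorem statement1 {V : Type*} [Fintype V] [DecidableEq V] (G : SimpleGraph V)
    [DecidableRel G.Adj] (hcubic : G.IsRegularOfDegree 3)
    (hpm : ∃ M, IsPerfMatching G M) (hpmh : HasPMH G) : IsE2F G := by
  intro F hF
  -- the complement of the 2-factor is a perfect matching
  have hM : IsPerfMatching G (G.edgeSet \ F) := by
    refine ⟨Set.diff_subset, fun v => ?_⟩
    obtain ⟨e₁, e₂, hne, he₁, he₂, hv₁, hv₂, hmax⟩ := hF.2 v
    have hincid : ∀ e : Sym2 V, e ∈ G.edgeSet → v ∈ e → e ∈ G.incidenceFinset v := by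
      intro e heE hev
      rw [mem_incidenceFinset]
      exact ⟨heE, hev⟩
    have hcard : (G.incidenceFinset v).card = 3 := by
      rw [card_incidenceFinset_eq_degree]; exact hcubic v
    have hex : ∃ e₃ ∈ G.incidenceFinset v, e₃ ∉ ({e₁, e₂} : Finset (Sym2 V)) := by
      by_contra hcon
      push_neg at hcon
      have hle := Finset.card_le_card hcon
      rw [hcard] at hle
      have := Finset.card_insert_le e₁ ({e₂} : Finset (Sym2 V))
      simp [Finset.card_singleton] at this hle
      omega
    obtain ⟨e₃, he₃I, he₃p⟩ := hex
    simp only [Finset.mem_insert, Finset.mem_singleton, not_or] at he₃p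
    obtain ⟨h31, h32⟩ := he₃p
    rw [mem_incidenceFinset] at he₃I
    obtain ⟨he₃E, hv₃⟩ := he₃I
    have h3F : e₃ ∉ F := by
      intro hc
      rcases hmax e₃ hc hv₃ with rfl | rfl
      · exact h31 rfl
      · exact h32 rfl
    refine ⟨e₃, ⟨⟨he₃E, h3F⟩, hv₃⟩, ?_⟩
    rintro y ⟨⟨hyE, hyF⟩, hyv⟩
    by_contra hne'
    have hy1 : y ≠ e₁ := fun h => hyF (h ▸ he₁)
    have hy2 : y ≠ e₂ := fun h => hyF (h ▸ he₂)
    have hsub4 : ({y, e₃, e₁, e₂} : Finset (Sym2 V)) ⊆ G.incidenceFinset v := by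
      intro e he
      simp only [Finset.mem_insert, Finset.mem_singleton] at he
      rcases he with rfl | rfl | rfl | rfl
      · exact hincid _ hyE hyv
      · exact hincid _ he₃E hv₃
      · exact hincid _ (hF.1 he₁) hv₁
      · exact hincid _ (hF.1 he₂) hv₂
    have hc4 : ({y, e₃, e₁, e₂} : Finset (Sym2 V)).card = 4 := by
      rw [Finset.card_insert_of_notMem (by simp [hne', hy1, hy2]),
        Finset.card_insert_of_notMem (by simp [h31, h32]),
        Finset.card_pair hne]
    have := Finset.card_le_card hsub4
    rw [hc4, hcard] at this
    omega
  obtain ⟨N, hN, hHam⟩ := hpmh _ hM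
  obtain ⟨y, cH, hcH, hS⟩ := hHam
  -- N is disjoint from M, hence contained in F
  have hdisj : ∀ e, e ∈ N → e ∉ G.edgeSet \ F := by
    intro e heN heM
    induction e using Sym2.inductionOn with
    | hf a b =>
      have hasup : a ∈ cH.support := hcH.mem_support a
      set d := cH.rotate a hasup with hd_def
      have hd : d.IsCycle := hcH.isCycle.rotate hasup
      have hednil : ¬d.Nil := hd.not_nil
      have hmemiff : ∀ f : Sym2 V, f ∈ d.edges → f ∈ (G.edgeSet \ F) ∪ N := by
        intro f hf
        have : f ∈ cH.edges := (Walk.rotate_edges cH a hasup).mem_iff.mp hf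
        rw [hS]
        exact this
      have hf1 : s(a, d.getVert 1) ∈ d.edges := firstEdge_mem hednil
      have hf2 : s(d.getVert (d.length - 1), a) ∈ d.edges := lastEdge_mem hednil
      have hne12 : s(a, d.getVert 1) ≠ s(d.getVert (d.length - 1), a) :=
        cycle_first_ne_last hd
      obtain ⟨eM, -, huM⟩ := hM.2 a
      obtain ⟨eN, -, huN⟩ := hN.2 a
      have heqM : s(a, b) = eM := huM _ ⟨heM, Sym2.mem_mk_left a b⟩
      have heqN : s(a, b) = eN := huN _ ⟨heN, Sym2.mem_mk_left a b⟩
      have hkey : ∀ f : Sym2 V, f ∈ d.edges → a ∈ f → f = s(a, b) := by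
        intro f hf haf
        rcases hmemiff f hf with hfM | hfN
        · rw [heqM]; exact huM _ ⟨hfM, haf⟩
        · rw [heqN]; exact huN _ ⟨hfN, haf⟩
      have h1 := hkey _ hf1 (Sym2.mem_mk_left _ _)
      have h2 := hkey _ hf2 (Sym2.mem_mk_right _ _)
      exact hne12 (h1.trans h2.symm)
  have hNF : N ⊆ F := by
    intro n hn
    by_contra hnF
    exact hdisj n hn ⟨hN.1 hn, hnF⟩
  -- key alternation property
  have Hkey : ∀ (v : V) (e e' : Sym2 V), e ≠ e' → v ∈ e → v ∈ e' → e ∈ F → e' ∈ F →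
      (e ∈ N ↔ e' ∉ N) := by
    intro v e e' hne hve hve' heF he'F
    obtain ⟨eN, ⟨heNN, hveN⟩, huN⟩ := hN.2 v
    obtain ⟨e₁, e₂, h12, h1F, h2F, hv1, hv2, hmax⟩ := hF.2 v
    have heNmem : eN = e₁ ∨ eN = e₂ := hmax eN (hNF heNN) hveN
    have he : e = e₁ ∨ e = e₂ := hmax e heF hve
    have he' : e' = e₁ ∨ e' = e₂ := hmax e' he'F hve'
    have heNe : eN = e ∨ eN = e' := by
      rcases he with rfl | rfl <;> rcases he' with rfl | rfl <;> tauto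
    have hiff : e ∈ N ↔ e = eN := ⟨fun h => huN e ⟨h, hve⟩, fun h => h ▸ heNN⟩
    have hiff' : e' ∈ N ↔ e' = eN := ⟨fun h => huN e' ⟨h, hve'⟩, fun h => h ▸ heNN⟩
    rw [hiff, hiff']
    constructor
    · rintro rfl h
      exact hne h.symm
    · intro h
      rcases heNe with h' | h'
      · exact h'.symm
      · exact absurd h'.symm h
  -- conclude: every cycle inside F is even
  intro x c hc hcF
  rcases Nat.even_or_odd c.length with heven | hodd
  · exact heven
  exfalso
  have halt := walk_alt Hkey c hc.not_nil hcF hc.edges_nodup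
  have hne := cycle_first_ne_last hc
  have hk := Hkey x _ _ hne (Sym2.mem_mk_left _ _) (Sym2.mem_mk_right _ _)
    (hcF _ (firstEdge_mem hc.not_nil)) (hcF _ (lastEdge_mem hc.not_nil))
  rw [iff_true_intro hodd] at halt
  tauto
end

section
/- Let G be a finite cubic (3-regular) simple graph admitting a perfect matching such that every 2-factor of G is a Hamiltonian cycle of G. Then G has the PMH-property. -/
open SimpleGraph


/- ### Auxiliary lemmas -/

lemma mem_edges_iff_getVert {V : Type*} {G : SimpleGraph V} {u v : V} (p : G.Walk u v)
    {e : Sym2 V} :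
    e ∈ p.edges ↔ ∃ i, i < p.length ∧ e = s(p.getVert i, p.getVert (i + 1)) := by
  induction p with
  | nil => simp
  | @cons a b c h q ih =>
    simp only [SimpleGraph.Walk.edges_cons, List.mem_cons, ih, SimpleGraph.Walk.length_cons]
    constructor
    · rintro (rfl | ⟨i, hi, rfl⟩)
      · exact ⟨0, Nat.succ_pos _, by
          simp [SimpleGraph.Walk.getVert_zero, SimpleGraph.Walk.getVert_cons_succ]⟩
      · exact ⟨i + 1, by omega, by simp [SimpleGraph.Walk.getVert_cons_succ]⟩
    · rintro ⟨i, hi, rfl⟩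
      cases i with
      | zero =>
        left
        simp [SimpleGraph.Walk.getVert_zero, SimpleGraph.Walk.getVert_cons_succ]
      | succ i =>
        right
        exact ⟨i, by omega, by simp [SimpleGraph.Walk.getVert_cons_succ]⟩

lemma support_getElem_eq_getVert {V : Type*} {G : SimpleGraph V} {u v : V} (p : G.Walk u v)
    (i : ℕ) (h : i < p.support.length) : p.support[i] = p.getVert i := by
  induction p generalizing i with
  | nil => simp at h; simp [h]
  | @cons a b c hadj q ih =>
    cases i with
    | zero => simp
    | succ i =>
      simp only [SimpleGraph.Walk.support_cons] at h ⊢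
      simp only [List.getElem_cons_succ, SimpleGraph.Walk.getVert_cons_succ]
      exact ih i (by simp at h ⊢; omega)

/-- In a Hamiltonian cycle, `getVert` is injective on `[1, length]`. -/
lemma hamCycle_getVert_inj {V : Type*} [DecidableEq V] {G : SimpleGraph V} {x : V} {c : G.Walk x x}
    (hc : c.IsHamiltonianCycle) {k l : ℕ} (hk1 : 1 ≤ k) (hkn : k ≤ c.length)
    (hl1 : 1 ≤ l) (hln : l ≤ c.length) (h : c.getVert k = c.getVert l) : k = l := by
  have hnd : c.support.tail.Nodup := hc.isCycle.support_nodup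
  have hlen : c.support.length = c.length + 1 := SimpleGraph.Walk.length_support c
  have htlen : c.support.tail.length = c.length := by
    rw [List.length_tail, hlen]; omega
  have hk' : k - 1 < c.support.tail.length := by omega
  have hl' : l - 1 < c.support.tail.length := by omega
  have e1 : c.support.tail[k - 1] = c.getVert k := by
    rw [List.getElem_tail]
    rw [support_getElem_eq_getVert]
    congr 1; omega
  have e2 : c.support.tail[l - 1] = c.getVert l := by
    rw [List.getElem_tail]
    rw [support_getElem_eq_getVert]
    congr 1; omega
  have heq : c.support.tail[k - 1]'hk' = c.support.tail[l - 1]'hl' := by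
    rw [e1, e2]; exact h
  have := (hnd.getElem_inj_iff).mp heq
  omega

/-- In a Hamiltonian cycle, every vertex is `getVert k` for some `k ∈ [1, length]`. -/
lemma hamCycle_getVert_surj {V : Type*} [DecidableEq V] {G : SimpleGraph V} {x : V} {c : G.Walk x x}
    (hc : c.IsHamiltonianCycle) (v : V) :
    ∃ k, 1 ≤ k ∧ k ≤ c.length ∧ c.getVert k = v := by
  have hv : v ∈ c.support := hc.mem_support v
  obtain ⟨n, hn, hnl⟩ := SimpleGraph.Walk.mem_support_iff_exists_getVert.mp hv
  rcases Nat.eq_zero_or_pos n with rfl | hpos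
  · refine ⟨c.length, ?_, le_refl _, ?_⟩
    · have := hc.isCycle.three_le_length; omega
    · rw [SimpleGraph.Walk.getVert_length]
      rw [SimpleGraph.Walk.getVert_zero] at hn
      exact hn
  · exact ⟨n, hpos, hnl, hn⟩

/-- A graph with a perfect matching (as an edge set) has evenly many vertices. -/
lemma even_card_of_perfMatching {V : Type*} [Fintype V] (G : SimpleGraph V)
    {M : Set (Sym2 V)} (hM : IsPerfMatching G M) : Even (Fintype.card V) := by
  classical
  obtain ⟨hsub, huniq⟩ := hM
  have hadj : ∀ a b : V, s(a, b) ∈ M → G.Adj a b := fun a b h => (hsub h)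
  let M' : G.Subgraph :=
    { verts := Set.univ
      Adj := fun a b => s(a, b) ∈ M
      adj_sub := fun h => hadj _ _ h
      edge_vert := fun _ => trivial
      symm := ⟨fun a b h => by change s(b, a) ∈ M; rw [Sym2.eq_swap]; exact h⟩ }
  have hpm : M'.IsPerfectMatching := by
    rw [SimpleGraph.Subgraph.isPerfectMatching_iff]
    intro v
    obtain ⟨e, ⟨heM, hev⟩, hu⟩ := huniq v
    obtain ⟨w, rfl⟩ := Sym2.mem_iff_exists.mp hev
    refine ⟨w, heM, fun y hy => ?_⟩
    have : s(v, y) = s(v, w) := hu _ ⟨hy, by simp⟩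
    exact Sym2.congr_right.mp this
  exact hpm.even_card

/-- Complement of a perfect matching in a cubic graph is a 2-factor. -/
lemma compl_perfMatching_is2Factor {V : Type*} [Fintype V] [DecidableEq V]
    (G : SimpleGraph V) [DecidableRel G.Adj] (hcubic : G.IsRegularOfDegree 3)
    {M : Set (Sym2 V)} (hM : IsPerfMatching G M) :
    Is2Factor G (G.edgeSet \ M) := by
  obtain ⟨hsub, huniq⟩ := hM
  refine ⟨Set.diff_subset, fun v => ?_⟩
  obtain ⟨e₀, ⟨he₀M, he₀v⟩, hu⟩ := huniq v
  have he₀ : e₀ ∈ G.incidenceFinset v := by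
    rw [SimpleGraph.mem_incidenceFinset]
    exact ⟨hsub he₀M, he₀v⟩
  have hcard : ((G.incidenceFinset v).erase e₀).card = 2 := by
    rw [Finset.card_erase_of_mem he₀, SimpleGraph.card_incidenceFinset_eq_degree, hcubic v]
  obtain ⟨e₁, e₂, hne, hset⟩ := Finset.card_eq_two.mp hcard
  have mem1 : e₁ ∈ (G.incidenceFinset v).erase e₀ := by rw [hset]; simp
  have mem2 : e₂ ∈ (G.incidenceFinset v).erase e₀ := by rw [hset]; simp
  have h1 := Finset.mem_erase.mp mem1
  have h2 := Finset.mem_erase.mp mem2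
  have h1' : e₁ ∈ G.incidenceSet v := by
    rw [← SimpleGraph.mem_incidenceFinset]; exact h1.2
  have h2' : e₂ ∈ G.incidenceSet v := by
    rw [← SimpleGraph.mem_incidenceFinset]; exact h2.2
  have hnotM : ∀ e, e ∈ G.incidenceSet v → e ≠ e₀ → e ∉ M := by
    intro e he hne heM
    exact hne (hu e ⟨heM, he.2⟩)
  refine ⟨e₁, e₂, hne, ⟨h1'.1, hnotM _ h1' h1.1⟩, ⟨h2'.1, hnotM _ h2' h2.1⟩,
    h1'.2, h2'.2, fun e he hev => ?_⟩
  have : e ∈ (G.incidenceFinset v).erase e₀ := by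
    rw [Finset.mem_erase, SimpleGraph.mem_incidenceFinset]
    refine ⟨fun h => he.2 (h ▸ he₀M), he.1, hev⟩
  rw [hset] at this
  simpa using this

/-- Let `G` be a finite cubic simple graph admitting a perfect matching such that every
2-factor of `G` is a Hamiltonian cycle of `G`. Then `G` has the PMH-property. -/
theorem statement2 {V : Type*} [Fintype V] [DecidableEq V] (G : SimpleGraph V)
    [DecidableRel G.Adj] (hcubic : G.IsRegularOfDegree 3)
    (hpm : ∃ M, IsPerfMatching G M)
    (h2f : ∀ F, Is2Factor G F → IsHamCycleSet G F) : HasPMH G := by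
  intro M hM
  have hMsub := hM.1
  have hMuniq := hM.2
  -- the complement of M is a 2-factor, hence a Hamiltonian cycle
  have hF : Is2Factor G (G.edgeSet \ M) := compl_perfMatching_is2Factor G hcubic hM
  obtain ⟨x, c, hc, hFeq⟩ := h2f _ hF
  set n := c.length with hn
  have hn3 : 3 ≤ n := hc.isCycle.three_le_length
  have hneven : Even n := by
    rw [hn, hc.length_eq]
    exact even_card_of_perfMatching G hM
  -- alternate edges of the Hamiltonian cycle
  set N : Set (Sym2 V) := {e | ∃ i, i < n ∧ Even i ∧ e = s(c.getVert i, c.getVert (i + 1))}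
    with hNdef
  have hNedges : ∀ e ∈ N, e ∈ c.edges := by
    rintro e ⟨i, hi, -, rfl⟩
    exact (mem_edges_iff_getVert c).mpr ⟨i, hi, rfl⟩
  have hNF : N ⊆ G.edgeSet \ M := fun e he => by
    rw [hFeq]; exact hNedges e he
  have hNsub : N ⊆ G.edgeSet := fun e he => (hNF he).1
  -- positions of vertices on the cycle
  have key : ∀ v : V, ∃! e, e ∈ N ∧ v ∈ e := by
    intro v
    obtain ⟨k, hk1, hkn, hkv⟩ := hamCycle_getVert_surj hc v
    -- characterize indices whose getVert is v
    have hidx : ∀ j, 1 ≤ j → j ≤ n → c.getVert j = v → j = k := fun j h1 h2 h3 =>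
      hamCycle_getVert_inj hc h1 h2 hk1 hkn (h3.trans hkv.symm)
    rcases Nat.even_or_odd k with hke | hko
    · rcases eq_or_lt_of_le hkn with rfl | hklt
      · -- k = n : v = x, use edge 0
        have hvx : v = x := by rw [← hkv, SimpleGraph.Walk.getVert_length]
        refine ⟨s(c.getVert 0, c.getVert 1), ⟨⟨0, by omega, Even.zero, rfl⟩, by
          simp [SimpleGraph.Walk.getVert_zero, hvx]⟩, ?_⟩
        rintro e ⟨⟨j, hj, hje, rfl⟩, hve⟩
        rcases Sym2.mem_iff.mp hve with h | h
        · rcases Nat.eq_zero_or_pos j with rfl | hjpos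
          · rfl
          · have := hidx j hjpos (le_of_lt hj) h.symm; omega
        · have hj1 : j + 1 = c.length := hidx (j + 1) (by omega) (by omega) h.symm
          exfalso
          have : Odd (j + 1) := Even.add_one hje
          rw [hj1] at this
          exact (Nat.not_even_iff_odd.mpr this) (hn ▸ hneven)
      · -- k even, k < n : use edge k
        refine ⟨s(c.getVert k, c.getVert (k + 1)), ⟨⟨k, hklt, hke, rfl⟩, by
          simp [hkv]⟩, ?_⟩
        rintro e ⟨⟨j, hj, hje, rfl⟩, hve⟩
        rcases Sym2.mem_iff.mp hve with h | h
        · rcases Nat.eq_zero_or_pos j with rfl | hjpos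
          · -- j = 0 : then v = x = getVert n, so k = n, contradiction
            exfalso
            have hvx : c.getVert n = v := by
              rw [SimpleGraph.Walk.getVert_length, ← SimpleGraph.Walk.getVert_zero c, h]
            have := hidx n (by omega) le_rfl hvx
            omega
          · have := hidx j hjpos (le_of_lt hj) h.symm; subst this; rfl
        · exfalso
          have := hidx (j + 1) (by omega) (by omega) h.symm
          subst this
          exact (Nat.even_add_one.mp hke) hje
    · -- k odd : use edge k - 1
      have hk2 : k - 1 < n := by omega
      have hk1e : Even (k - 1) := by
        rcases hko with ⟨m, hm⟩
        exact ⟨m, by omega⟩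
      have hsucc : k - 1 + 1 = k := by omega
      refine ⟨s(c.getVert (k - 1), c.getVert (k - 1 + 1)), ⟨⟨k - 1, hk2, hk1e, rfl⟩, by
        rw [hsucc, hkv]; simp⟩, ?_⟩
      rintro e ⟨⟨j, hj, hje, rfl⟩, hve⟩
      rcases Sym2.mem_iff.mp hve with h | h
      · rcases Nat.eq_zero_or_pos j with rfl | hjpos
        · exfalso
          have hvx : c.getVert n = v := by
            rw [SimpleGraph.Walk.getVert_length, ← SimpleGraph.Walk.getVert_zero c, h]
          have := hidx n (by omega) le_rfl hvx
          subst this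
          exact (Nat.not_even_iff_odd.mpr hko) (hn ▸ hneven)
        · exfalso
          have := hidx j hjpos (le_of_lt hj) h.symm
          subst this
          exact (Nat.not_even_iff_odd.mpr hko) hje
      · have := hidx (j + 1) (by omega) (by omega) h.symm
        have : j = k - 1 := by omega
        subst this; rfl
  have hNpm : IsPerfMatching G N := ⟨hNsub, key⟩
  refine ⟨N, hNpm, ?_⟩
  -- M ∪ N is a 2-factor
  apply h2f
  refine ⟨Set.union_subset hMsub hNsub, fun v => ?_⟩
  obtain ⟨e₀, ⟨he₀M, he₀v⟩, hu₀⟩ := hMuniq v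
  obtain ⟨e₁, ⟨he₁N, he₁v⟩, hu₁⟩ := key v
  have hne : e₀ ≠ e₁ := by
    intro h
    exact (hNF he₁N).2 (h ▸ he₀M)
  refine ⟨e₀, e₁, hne, Or.inl he₀M, Or.inr he₁N, he₀v, he₁v, fun e he hev => ?_⟩
  rcases he with h | h
  · exact Or.inl (hu₀ e ⟨h, hev⟩)
  · exact Or.inr (hu₁ e ⟨h, hev⟩)
end

section
/- For all positive integers r and ℓ with r ≤ ℓ, the papillon graph P_{r,ℓ} contains a cycle of odd length 2r+3; in particular, P_{r,ℓ} is not bipartite. -/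
open SimpleGraph


/-- Vertices of the papillon graph `P_{r,ℓ}`: `(false, i)` is the outer vertex `u_i`
and `(true, i)` is the inner vertex `v_i`, where indices are taken in `ZMod (2(r+ℓ))`
(so the 1-based index `i ∈ {1, …, 2(r+ℓ)}` corresponds to `i mod 2(r+ℓ)`). -/
abbrev PapVert (N : ℕ) : Type := Bool × ZMod N

/-- The outer vertex `u_i` (1-based index `i`). -/
def pu (N : ℕ) (i : ℕ) : PapVert N := (false, (i : ZMod N))

/-- The inner vertex `v_i` (1-based index `i`). -/
def pv (N : ℕ) (i : ℕ) : PapVert N := (true, (i : ZMod N))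

/-- The edge set of the papillon graph `P_{r,ℓ}`: the outer-cycle edges, the spokes,
and the inner-cycle edges. -/
def papillonEdges (r l : ℕ) : Set (Sym2 (PapVert (2 * (r + l)))) :=
  {e | (∃ i, 1 ≤ i ∧ i ≤ 2 * (r + l) - 1 ∧
          e = s(pu (2 * (r + l)) i, pu (2 * (r + l)) (i + 1)))
      ∨ e = s(pu (2 * (r + l)) (2 * (r + l)), pu (2 * (r + l)) 1)
      ∨ (∃ i, 1 ≤ i ∧ i ≤ 2 * (r + l) ∧
          e = s(pu (2 * (r + l)) i, pv (2 * (r + l)) i))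
      ∨ (∃ i, 1 ≤ i ∧ i ≤ r + l ∧
          e = s(pv (2 * (r + l)) (2 * i - 1), pv (2 * (r + l)) (2 * i)))
      ∨ (∃ i, 1 ≤ i ∧ i ≤ r + l - 1 ∧ i ≠ min r l ∧
          e = s(pv (2 * (r + l)) (2 * i - 1), pv (2 * (r + l)) (2 * i + 2)))
      ∨ e = s(pv (2 * (r + l)) 2, pv (2 * (r + l)) (2 * min r l + 2))
      ∨ e = s(pv (2 * (r + l)) (2 * min r l - 1), pv (2 * (r + l)) (2 * (r + l) - 1))}

/-- The papillon graph `P_{r,ℓ}`. -/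
def papillon (r l : ℕ) : SimpleGraph (PapVert (2 * (r + l))) :=
  SimpleGraph.fromEdgeSet (papillonEdges r l)

lemma natCast_inj_window {N a b : ℕ} (ha1 : 1 ≤ a) (ha : a ≤ N) (hb1 : 1 ≤ b) (hb : b ≤ N)
    (h : (a : ZMod N) = (b : ZMod N)) : a = b := by
  have h2 : a % N = b % N := (ZMod.natCast_eq_natCast_iff a b N).mp h
  rcases eq_or_lt_of_le ha with rfl | ha'
  · rw [Nat.mod_self] at h2
    rcases eq_or_lt_of_le hb with rfl | hb'
    · rfl
    · rw [Nat.mod_eq_of_lt hb'] at h2; omega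
  · rw [Nat.mod_eq_of_lt ha'] at h2
    rcases eq_or_lt_of_le hb with rfl | hb'
    · rw [Nat.mod_self] at h2; omega
    · rw [Nat.mod_eq_of_lt hb'] at h2; omega

lemma pu_inj {N a b : ℕ} (ha1 : 1 ≤ a) (ha : a ≤ N) (hb1 : 1 ≤ b) (hb : b ≤ N)
    (h : pu N a = pu N b) : a = b :=
  natCast_inj_window ha1 ha hb1 hb (congrArg Prod.snd h)

lemma pv_inj {N a b : ℕ} (ha1 : 1 ≤ a) (ha : a ≤ N) (hb1 : 1 ≤ b) (hb : b ≤ N)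
    (h : pv N a = pv N b) : a = b :=
  natCast_inj_window ha1 ha hb1 hb (congrArg Prod.snd h)

lemma pu_ne_pv {N a b : ℕ} : pu N a ≠ pv N b := by simp [pu, pv]

lemma outer_adj (r l k : ℕ) (h : k + 3 ≤ 2 * (r + l)) :
    (papillon r l).Adj (pu (2 * (r + l)) (k + 3)) (pu (2 * (r + l)) (k + 2)) := by
  rw [papillon, fromEdgeSet_adj]
  constructor
  · left
    exact ⟨k + 2, by omega, by omega, by rw [Sym2.eq_swap]⟩
  · intro hcon
    have := pu_inj (by omega) h (by omega) (by omega) hcon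
    omega

def outerWalk (r l : ℕ) : (k : ℕ) → k + 2 ≤ 2 * (r + l) →
    (papillon r l).Walk (pu (2 * (r + l)) (k + 2)) (pu (2 * (r + l)) 2)
  | 0, _ => Walk.nil
  | k + 1, h => Walk.cons (outer_adj r l k (by omega)) (outerWalk r l k (by omega))

lemma mem_support_outerWalk (r l : ℕ) (k : ℕ) : ∀ (h : k + 2 ≤ 2 * (r + l)) (x),
    x ∈ (outerWalk r l k h).support → ∃ j, 2 ≤ j ∧ j ≤ k + 2 ∧ x = pu (2 * (r + l)) j := by
  induction k with
  | zero =>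
    intro h x hx
    rw [outerWalk] at hx
    simp only [Walk.support_nil, List.mem_singleton] at hx
    exact ⟨2, le_refl _, le_refl _, hx⟩
  | succ k ih =>
    intro h x hx
    rw [outerWalk] at hx
    simp only [Walk.support_cons, List.mem_cons] at hx
    rcases hx with rfl | hx
    · exact ⟨k + 3, by omega, by omega, rfl⟩
    · obtain ⟨j, hj1, hj2, hj3⟩ := ih (by omega) x hx
      exact ⟨j, hj1, by omega, hj3⟩

lemma length_outerWalk (r l : ℕ) (k : ℕ) : ∀ (h : k + 2 ≤ 2 * (r + l)),
    (outerWalk r l k h).length = k := by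
  induction k with
  | zero => intro h; rw [outerWalk]; rfl
  | succ k ih => intro h; rw [outerWalk, Walk.length_cons, ih]

lemma isPath_outerWalk (r l : ℕ) (k : ℕ) : ∀ (h : k + 2 ≤ 2 * (r + l)),
    (outerWalk r l k h).IsPath := by
  induction k with
  | zero => intro h; rw [outerWalk]; exact Walk.IsPath.nil
  | succ k ih =>
    intro h
    rw [outerWalk, Walk.cons_isPath_iff]
    refine ⟨ih (by omega), fun hmem => ?_⟩
    obtain ⟨j, hj1, hj2, hj3⟩ := mem_support_outerWalk r l k (by omega) _ hmem
    have := pu_inj (by omega) h (by omega) (by omega) hj3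
    omega
lemma fin2_aux {a b c : Fin 2} (h : a ≠ b) : a = c ↔ ¬ b = c := by
  simp only [Fin.ext_iff] at h ⊢
  omega

lemma coloring_walk_parity {V : Type*} {G : SimpleGraph V} (C : G.Coloring (Fin 2))
    {x y : V} (p : G.Walk x y) : C x = C y ↔ Even p.length := by
  induction p with
  | nil => simp
  | @cons x z y h q ih =>
    have hne : C x ≠ C z := C.valid h
    rw [Walk.length_cons, Nat.even_add_one, ← ih, fin2_aux hne]


/-- For all positive integers `r ≤ ℓ`, the papillon graph `P_{r,ℓ}` contains a cycle of
(odd) length `2r+3`; in particular, `P_{r,ℓ}` is not bipartite (not 2-colourable). -/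
theorem statement3 (r l : ℕ) (hr : 1 ≤ r) (hrl : r ≤ l) :
    (∃ (x : PapVert (2 * (r + l))) (c : (papillon r l).Walk x x),
        c.IsCycle ∧ c.length = 2 * r + 3 ∧ Odd c.length)
      ∧ ¬ (papillon r l).Colorable 2 := by
  have hs : min r l = r := min_eq_left hrl
  have hN4 : 4 ≤ 2 * (r + l) := by omega
  have hNr : 2 * r + 2 ≤ 2 * (r + l) := by omega
  -- adjacencies
  have a1 : (papillon r l).Adj (pv (2 * (r + l)) 2) (pv (2 * (r + l)) (2 * r + 2)) := by
    rw [papillon, fromEdgeSet_adj]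
    refine ⟨Or.inr (Or.inr (Or.inr (Or.inr (Or.inr (Or.inl ?_))))), ?_⟩
    · rw [hs]
    · intro hcon
      have := pv_inj (by omega) (by omega) (by omega) hNr hcon
      omega
  have a2 : (papillon r l).Adj (pv (2 * (r + l)) (2 * r + 2)) (pu (2 * (r + l)) (2 * r + 2)) := by
    rw [papillon, fromEdgeSet_adj]
    refine ⟨Or.inr (Or.inr (Or.inl ⟨2 * r + 2, by omega, hNr, by rw [Sym2.eq_swap]⟩)), ?_⟩
    exact fun hcon => pu_ne_pv hcon.symm
  have a3 : (papillon r l).Adj (pu (2 * (r + l)) 2) (pv (2 * (r + l)) 2) := by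
    rw [papillon, fromEdgeSet_adj]
    exact ⟨Or.inr (Or.inr (Or.inl ⟨2, by omega, by omega, rfl⟩)), fun hcon => pu_ne_pv hcon⟩
  have hkey : 2 * r + 2 ≤ 2 * (r + l) := hNr
  let w1 : (papillon r l).Walk (pu (2 * (r + l)) (2 * r + 2)) (pu (2 * (r + l)) 2) :=
    outerWalk r l (2 * r) hkey
  have hw1path : w1.IsPath := isPath_outerWalk r l (2 * r) hkey
  have hw1len : w1.length = 2 * r := length_outerWalk r l (2 * r) hkey
  have hw1mem : ∀ x ∈ w1.support, ∃ j, 2 ≤ j ∧ j ≤ 2 * r + 2 ∧ x = pu (2 * (r + l)) j :=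
    mem_support_outerWalk r l (2 * r) hkey
  let q : (papillon r l).Walk (pu (2 * (r + l)) (2 * r + 2)) (pv (2 * (r + l)) 2) :=
    w1.append (Walk.cons a3 Walk.nil)
  let p : (papillon r l).Walk (pv (2 * (r + l)) (2 * r + 2)) (pv (2 * (r + l)) 2) :=
    Walk.cons a2 q
  let c : (papillon r l).Walk (pv (2 * (r + l)) 2) (pv (2 * (r + l)) 2) :=
    Walk.cons a1 p
  have hqsupp : q.support = w1.support ++ [pv (2 * (r + l)) 2] := by
    rw [Walk.support_append]
    rfl
  have hpvnotin : ∀ m : ℕ, pv (2 * (r + l)) m ∉ w1.support := by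
    intro m hm
    obtain ⟨j, _, _, hj⟩ := hw1mem _ hm
    exact pu_ne_pv hj.symm
  have hqpath : q.IsPath := by
    rw [Walk.isPath_def, hqsupp, List.nodup_append]
    refine ⟨hw1path.support_nodup, List.nodup_singleton _, ?_⟩
    intro x hx y hx2 hxy
    rw [List.mem_singleton] at hx2
    subst hx2 hxy
    exact hpvnotin 2 hx
  have hppath : p.IsPath := by
    rw [Walk.cons_isPath_iff]
    refine ⟨hqpath, ?_⟩
    rw [hqsupp, List.mem_append, List.mem_singleton]
    rintro (hx | hx)
    · exact hpvnotin _ hx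
    · have := pv_inj (by omega) hNr (by omega) (by omega) hx
      omega
  have hcyc : c.IsCycle := by
    rw [Walk.cons_isCycle_iff]
    refine ⟨hppath, ?_⟩
    intro hmem
    rw [Walk.edges_cons, List.mem_cons] at hmem
    rcases hmem with hmem | hmem
    · rw [Sym2.eq_iff] at hmem
      rcases hmem with ⟨h1, h2⟩ | ⟨h1, h2⟩
      · exact pu_ne_pv h2.symm
      · exact pu_ne_pv h1.symm
    · rw [show q.edges = w1.edges ++ (Walk.cons a3 Walk.nil).edges from Walk.edges_append _ _,
        List.mem_append] at hmem
      rcases hmem with hmem | hmem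
      · exact hpvnotin 2 (w1.fst_mem_support_of_mem_edges hmem)
      · rw [Walk.edges_cons, Walk.edges_nil, List.mem_singleton, Sym2.eq_iff] at hmem
        rcases hmem with ⟨h1, h2⟩ | ⟨h1, h2⟩
        · exact pu_ne_pv h1.symm
        · exact pu_ne_pv h2.symm
  have hlen : c.length = 2 * r + 3 := by
    show (Walk.cons a1 (Walk.cons a2 (w1.append (Walk.cons a3 Walk.nil)))).length = 2 * r + 3
    rw [Walk.length_cons, Walk.length_cons, Walk.length_append, Walk.length_cons,
      Walk.length_nil, hw1len]
  refine ⟨⟨pv (2 * (r + l)) 2, c, hcyc, hlen, by rw [hlen]; exact ⟨r + 1, by ring⟩⟩, ?_⟩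
  intro hcol
  obtain ⟨C⟩ := hcol
  have := (coloring_walk_parity C c).mp rfl
  rw [hlen] at this
  obtain ⟨m, hm⟩ := this
  omega
end

section
/- For all positive integers r and ℓ with r ≤ ℓ, every cycle of odd length in the papillon graph P_{r,ℓ} has length at least 2r+3; consequently, a shortest odd cycle of P_{r,ℓ} has length exactly 2r+3. -/
open SimpleGraph


namespace PapAux

/-- shifted index for the first potential -/
def T1 (r l v : ℕ) : ℕ := if 2 ≤ v then v - 2 else v + 2 * (r + l) - 2

/-- shifted index for the second potential -/
def T2 (r l v : ℕ) : ℕ :=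
  if 2 * r - 1 ≤ v then v - (2 * r - 1) else v + 2 * (r + l) - (2 * r - 1)

/-- cyclic distance term -/
def DD (r l t : ℕ) : ℤ := (min t (2 * (r + l) - t) : ℕ)

/-- inner correction for the first potential -/
def EF1 (r l t : ℕ) : ℤ :=
  if t = 2 * r then 1 else if t = r + l then -1
  else if t < r + l then (if t % 2 = 1 then 1 else -1)
  else (if t % 2 = 1 then -1 else 1)

/-- inner correction for the second potential -/
def EF2 (r l t : ℕ) : ℤ :=
  if t = 0 then -1 else if t = 2 * l then 1 else if t = r + l then -1
  else if t < r + l then (if t % 2 = 0 then 1 else -1)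
  else (if t % 2 = 0 then -1 else 1)

/-- first potential -/
def HH1 (r l : ℕ) (x : PapVert (2 * (r + l))) : ℤ :=
  DD r l (T1 r l x.2.val) + cond x.1 (EF1 r l (T1 r l x.2.val)) 0

/-- second potential -/
def HH2 (r l : ℕ) (x : PapVert (2 * (r + l))) : ℤ :=
  DD r l (T2 r l x.2.val) + cond x.1 (EF2 r l (T2 r l x.2.val)) 0

/-- parity function -/
def CHI (r l : ℕ) (x : PapVert (2 * (r + l))) : ZMod 2 :=
  (cond x.1 1 0) + (x.2.val : ZMod 2)

lemma cast_inj {N a b : ℕ} (hN : 0 < N) (ha1 : 1 ≤ a) (ha : a ≤ N) (hb1 : 1 ≤ b) (hb : b ≤ N)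
    (h : (a : ZMod N) = b) : a = b := by
  haveI : NeZero N := ⟨by omega⟩
  have h2 := congrArg ZMod.val h
  rw [ZMod.val_natCast, ZMod.val_natCast] at h2
  rcases Nat.lt_or_ge a N with h' | h' <;> rcases Nat.lt_or_ge b N with h'' | h''
  · rwa [Nat.mod_eq_of_lt h', Nat.mod_eq_of_lt h''] at h2
  · have hbb : b = N := by omega
    subst hbb
    rw [Nat.mod_eq_of_lt h', Nat.mod_self] at h2; omega
  · have haa : a = N := by omega
    subst haa
    rw [Nat.mod_self, Nat.mod_eq_of_lt h''] at h2; omega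
  · omega

/-- the local property of normal edges -/
def Q (r l : ℕ) (a b : PapVert (2 * (r + l))) : Prop :=
  CHI r l a ≠ CHI r l b ∧ |HH1 r l a - HH1 r l b| ≤ 1 ∧ |HH2 r l a - HH2 r l b| ≤ 1

lemma Q.symm {r l : ℕ} {a b : PapVert (2 * (r + l))} (h : Q r l a b) : Q r l b a :=
  ⟨h.1.symm, by rw [abs_sub_comm]; exact h.2.1, by rw [abs_sub_comm]; exact h.2.2⟩

end PapAux

namespace PapAux

lemma val_N {N : ℕ} (hN : 0 < N) : ((N : ZMod N)).val = 0 := by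
  haveI : NeZero N := ⟨by omega⟩
  rw [ZMod.val_natCast, Nat.mod_self]

lemma chi_pv_ne_pv {r l a b : ℕ} {va vb : ℕ} (hva : ((a : ZMod (2*(r+l)))).val = va)
    (hvb : ((b : ZMod (2*(r+l)))).val = vb) (h : va % 2 ≠ vb % 2) :
    CHI r l (pv (2*(r+l)) a) ≠ CHI r l (pv (2*(r+l)) b) := by
  simp only [CHI, pv, cond_true, hva, hvb, Ne, add_right_inj]
  rw [ZMod.natCast_eq_natCast_iff']
  omega

lemma chi_pu_ne_pu {r l a b : ℕ} {va vb : ℕ} (hva : ((a : ZMod (2*(r+l)))).val = va)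
    (hvb : ((b : ZMod (2*(r+l)))).val = vb) (h : va % 2 ≠ vb % 2) :
    CHI r l (pu (2*(r+l)) a) ≠ CHI r l (pu (2*(r+l)) b) := by
  simp only [CHI, pu, cond_false, Ne, hva, hvb, add_right_inj]
  rw [ZMod.natCast_eq_natCast_iff']
  omega

lemma chi_pu_ne_pv {r l a : ℕ} :
    CHI r l (pu (2*(r+l)) a) ≠ CHI r l (pv (2*(r+l)) a) := by
  simp only [CHI, pu, pv, cond_false, cond_true]
  intro h
  have := add_right_cancel h
  exact absurd this (by decide)

end PapAux
namespace PapAux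

lemma EF1_2r (r l t : ℕ) (h : t = 2*r) : EF1 r l t = 1 := by
  simp only [EF1]; split_ifs <;> omega
lemma EF1_odd_lo (r l t : ℕ) (h1 : t % 2 = 1) (h2 : t < r+l) : EF1 r l t = 1 := by
  simp only [EF1]; split_ifs <;> omega
lemma EF1_odd_hi (r l t : ℕ) (h1 : t % 2 = 1) (h2 : r+l ≤ t) : EF1 r l t = -1 := by
  simp only [EF1]; split_ifs <;> omega
lemma EF1_even_lo (r l t : ℕ) (h1 : t % 2 = 0) (h2 : t ≠ 2*r) (h3 : t ≤ r+l) :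
    EF1 r l t = -1 := by
  simp only [EF1]; split_ifs <;> omega
lemma EF1_even_hi (r l t : ℕ) (h1 : t % 2 = 0) (h2 : t ≠ 2*r) (h3 : r+l < t) :
    EF1 r l t = 1 := by
  simp only [EF1]; split_ifs <;> omega
lemma EF2_zero (r l t : ℕ) (h : t = 0) : EF2 r l t = -1 := by
  simp only [EF2]; split_ifs <;> omega
lemma EF2_2l (r l t : ℕ) (h0 : t ≠ 0) (h : t = 2*l) : EF2 r l t = 1 := by
  simp only [EF2]; split_ifs <;> omega
lemma EF2_even_lo (r l t : ℕ) (h1 : t % 2 = 0) (h0 : t ≠ 0) (h2 : t ≠ 2*l) (h3 : t < r+l) :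
    EF2 r l t = 1 := by
  simp only [EF2]; split_ifs <;> omega
lemma EF2_even_hi (r l t : ℕ) (h1 : t % 2 = 0) (h0 : t ≠ 0) (h2 : t ≠ 2*l) (h3 : r+l ≤ t) :
    EF2 r l t = -1 := by
  simp only [EF2]; split_ifs <;> omega
lemma EF2_odd_lo (r l t : ℕ) (h1 : t % 2 = 1) (h2 : t ≤ r+l) : EF2 r l t = -1 := by
  simp only [EF2]; split_ifs <;> omega
lemma EF2_odd_hi (r l t : ℕ) (h1 : t % 2 = 1) (h2 : r+l < t) : EF2 r l t = 1 := by
  simp only [EF2]; split_ifs <;> omega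

lemma Qrung {r l : ℕ} (hr : 1 ≤ r) (hrl : r ≤ l) {j : ℕ} (h1 : 1 ≤ j) (h2 : j ≤ r + l) :
    Q r l (pv (2*(r+l)) (2*j-1)) (pv (2*(r+l)) (2*j)) := by
  have hN : 4 ≤ 2 * (r + l) := by omega
  have hv1 : (((2*j-1 : ℕ) : ZMod (2*(r+l)))).val = 2*j-1 := ZMod.val_cast_of_lt (by omega)
  rcases Nat.lt_or_ge (2*j) (2*(r+l)) with hc | hc
  · have hv2 : (((2*j : ℕ) : ZMod (2*(r+l)))).val = 2*j := ZMod.val_cast_of_lt hc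
    refine ⟨chi_pv_ne_pv hv1 hv2 (by omega), ?_, ?_⟩
    · simp only [HH1, pv, cond_true, hv1, hv2]
      rcases Nat.lt_or_ge j 2 with hj | hj
      · rw [show T1 r l (2*j-1) = 2*(r+l)-1 from by simp only [T1]; split_ifs <;> omega,
          show T1 r l (2*j) = 0 from by simp only [T1]; split_ifs <;> omega]
        have e1 := EF1_odd_hi r l (2*(r+l)-1) (by omega) (by omega)
        have e2 := EF1_even_lo r l 0 (by omega) (by omega) (by omega)
        simp only [DD]; rw [abs_le]; omega
      · rw [show T1 r l (2*j-1) = 2*j-3 from by simp only [T1]; split_ifs <;> omega,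
          show T1 r l (2*j) = 2*j-2 from by simp only [T1]; split_ifs <;> omega]
        by_cases h2r : 2*j-2 = 2*r
        · have e2 := EF1_2r r l (2*j-2) h2r
          have e1 := EF1_odd_lo r l (2*j-3) (by omega) (by omega)
          simp only [DD]; rw [abs_le]; omega
        · rcases Nat.lt_or_ge (r+l) (2*j-2) with hP | hP
          · have e2 := EF1_even_hi r l (2*j-2) (by omega) h2r hP
            have e1 := EF1_odd_hi r l (2*j-3) (by omega) (by omega)
            simp only [DD]; rw [abs_le]; omega
          · have e2 := EF1_even_lo r l (2*j-2) (by omega) h2r hP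
            have e1 := EF1_odd_lo r l (2*j-3) (by omega) (by omega)
            simp only [DD]; rw [abs_le]; omega
    · simp only [HH2, pv, cond_true, hv1, hv2]
      rcases Nat.lt_or_ge j r with hj | hj
      · rw [show T2 r l (2*j-1) = 2*(r+l)+2*j-2*r from by simp only [T2]; split_ifs <;> omega,
          show T2 r l (2*j) = 2*(r+l)+2*j-2*r+1 from by simp only [T2]; split_ifs <;> omega]
        have e1 := EF2_even_hi r l (2*(r+l)+2*j-2*r) (by omega) (by omega) (by omega) (by omega)
        have e2 := EF2_odd_hi r l (2*(r+l)+2*j-2*r+1) (by omega) (by omega)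
        simp only [DD]; rw [abs_le]; omega
      · rw [show T2 r l (2*j-1) = 2*j-2*r from by simp only [T2]; split_ifs <;> omega,
          show T2 r l (2*j) = 2*j-2*r+1 from by simp only [T2]; split_ifs <;> omega]
        rcases Nat.eq_or_lt_of_le hj with hj' | hj'
        · have e1 := EF2_zero r l (2*j-2*r) (by omega)
          have e2 := EF2_odd_lo r l (2*j-2*r+1) (by omega) (by omega)
          simp only [DD]; rw [abs_le]; omega
        · rcases Nat.lt_or_ge (2*j-2*r) (r+l) with hP | hP
          · have e1 := EF2_even_lo r l (2*j-2*r) (by omega) (by omega) (by omega) hP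
            have e2 := EF2_odd_lo r l (2*j-2*r+1) (by omega) (by omega)
            simp only [DD]; rw [abs_le]; omega
          · have e1 := EF2_even_hi r l (2*j-2*r) (by omega) (by omega) (by omega) hP
            have e2 := EF2_odd_hi r l (2*j-2*r+1) (by omega) (by omega)
            simp only [DD]; rw [abs_le]; omega
  · have he : 2*j = 2*(r+l) := by omega
    have hv2 : (((2*j : ℕ) : ZMod (2*(r+l)))).val = 0 := by
      rw [he]; exact val_N (by omega)
    refine ⟨chi_pv_ne_pv hv1 hv2 (by omega), ?_, ?_⟩
    · simp only [HH1, pv, cond_true, hv1, hv2]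
      rw [show T1 r l (2*j-1) = 2*j-3 from by simp only [T1]; split_ifs <;> omega,
        show T1 r l 0 = 2*(r+l)-2 from by simp only [T1]; split_ifs <;> omega]
      by_cases h2r : 2*(r+l)-2 = 2*r
      · have e2 := EF1_2r r l (2*(r+l)-2) h2r
        have e1 := EF1_odd_lo r l (2*j-3) (by omega) (by omega)
        simp only [DD]; rw [abs_le]; omega
      · have e2 := EF1_even_hi r l (2*(r+l)-2) (by omega) h2r (by omega)
        have e1 := EF1_odd_hi r l (2*j-3) (by omega) (by omega)
        simp only [DD]; rw [abs_le]; omega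
    · simp only [HH2, pv, cond_true, hv1, hv2]
      rw [show T2 r l (2*j-1) = 2*j-2*r from by simp only [T2]; split_ifs <;> omega,
        show T2 r l 0 = 2*(r+l)-(2*r-1) from by simp only [T2]; split_ifs <;> omega]
      have e1 := EF2_2l r l (2*j-2*r) (by omega) (by omega)
      have e2 := EF2_odd_hi r l (2*(r+l)-(2*r-1)) (by omega) (by omega)
      simp only [DD]; rw [abs_le]; omega

end PapAux
namespace PapAux

lemma Qskip {r l : ℕ} (hr : 1 ≤ r) (hrl : r ≤ l) {j : ℕ} (h1 : 1 ≤ j) (h2 : j ≤ r + l - 1)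
    (h3 : j ≠ r) : Q r l (pv (2*(r+l)) (2*j-1)) (pv (2*(r+l)) (2*j+2)) := by
  have hN : 4 ≤ 2 * (r + l) := by omega
  have hv1 : (((2*j-1 : ℕ) : ZMod (2*(r+l)))).val = 2*j-1 := ZMod.val_cast_of_lt (by omega)
  rcases Nat.lt_or_ge (2*j+2) (2*(r+l)) with hc | hc
  · have hv2 : (((2*j+2 : ℕ) : ZMod (2*(r+l)))).val = 2*j+2 := ZMod.val_cast_of_lt hc
    refine ⟨chi_pv_ne_pv hv1 hv2 (by omega), ?_, ?_⟩
    · simp only [HH1, pv, cond_true, hv1, hv2]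
      rcases Nat.lt_or_ge j 2 with hj | hj
      · rw [show T1 r l (2*j-1) = 2*(r+l)-1 from by simp only [T1]; split_ifs <;> omega,
          show T1 r l (2*j+2) = 2*j from by simp only [T1]; split_ifs <;> omega]
        have e1 := EF1_odd_hi r l (2*(r+l)-1) (by omega) (by omega)
        have e2 := EF1_even_lo r l (2*j) (by omega) (by omega) (by omega)
        simp only [DD]; rw [abs_le]; omega
      · rw [show T1 r l (2*j-1) = 2*j-3 from by simp only [T1]; split_ifs <;> omega,
          show T1 r l (2*j+2) = 2*j from by simp only [T1]; split_ifs <;> omega]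
        rcases Nat.lt_or_ge (r+l) (2*j) with hP | hP
        · have e2 := EF1_even_hi r l (2*j) (by omega) (by omega) hP
          rcases Nat.lt_or_ge (2*j-3) (r+l) with hQ | hQ
          · have e1 := EF1_odd_lo r l (2*j-3) (by omega) hQ
            simp only [DD]; rw [abs_le]; omega
          · have e1 := EF1_odd_hi r l (2*j-3) (by omega) hQ
            simp only [DD]; rw [abs_le]; omega
        · have e2 := EF1_even_lo r l (2*j) (by omega) (by omega) hP
          have e1 := EF1_odd_lo r l (2*j-3) (by omega) (by omega)
          simp only [DD]; rw [abs_le]; omega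
    · simp only [HH2, pv, cond_true, hv1, hv2]
      rcases Nat.lt_or_ge j r with hj | hj
      · rcases Nat.eq_or_lt_of_le (show j ≤ r - 1 from by omega) with hj' | hj'
        · -- j = r - 1 (wrap)
          rw [show T2 r l (2*j-1) = 2*(r+l)+2*j-2*r from by
              simp only [T2]; split_ifs <;> omega,
            show T2 r l (2*j+2) = 2*j+2-(2*r-1) from by simp only [T2]; split_ifs <;> omega]
          have e1 := EF2_even_hi r l (2*(r+l)+2*j-2*r) (by omega) (by omega) (by omega)
            (by omega)
          have e2 := EF2_odd_lo r l (2*j+2-(2*r-1)) (by omega) (by omega)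
          simp only [DD]; rw [abs_le]; omega
        · -- j ≤ r - 2
          rw [show T2 r l (2*j-1) = 2*(r+l)+2*j-2*r from by
              simp only [T2]; split_ifs <;> omega,
            show T2 r l (2*j+2) = 2*(r+l)+2*j-2*r+3 from by
              simp only [T2]; split_ifs <;> omega]
          have e1 := EF2_even_hi r l (2*(r+l)+2*j-2*r) (by omega) (by omega) (by omega)
            (by omega)
          have e2 := EF2_odd_hi r l (2*(r+l)+2*j-2*r+3) (by omega) (by omega)
          simp only [DD]; rw [abs_le]; omega
      · -- j ≥ r + 1 since j ≠ r
        rw [show T2 r l (2*j-1) = 2*j-2*r from by simp only [T2]; split_ifs <;> omega,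
          show T2 r l (2*j+2) = 2*j-2*r+3 from by simp only [T2]; split_ifs <;> omega]
        rcases Nat.lt_or_ge (2*j-2*r) (r+l) with hP | hP
        · have e1 := EF2_even_lo r l (2*j-2*r) (by omega) (by omega) (by omega) hP
          rcases Nat.lt_or_ge (r+l) (2*j-2*r+3) with hQ | hQ
          · have e2 := EF2_odd_hi r l (2*j-2*r+3) (by omega) hQ
            simp only [DD]; rw [abs_le]; omega
          · have e2 := EF2_odd_lo r l (2*j-2*r+3) (by omega) hQ
            simp only [DD]; rw [abs_le]; omega
        · have e1 := EF2_even_hi r l (2*j-2*r) (by omega) (by omega) (by omega) hP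
          have e2 := EF2_odd_hi r l (2*j-2*r+3) (by omega) (by omega)
          simp only [DD]; rw [abs_le]; omega
  · have he : 2*j+2 = 2*(r+l) := by omega
    have hv2 : (((2*j+2 : ℕ) : ZMod (2*(r+l)))).val = 0 := by
      rw [he]; exact val_N (by omega)
    refine ⟨chi_pv_ne_pv hv1 hv2 (by omega), ?_, ?_⟩
    · simp only [HH1, pv, cond_true, hv1, hv2]
      rw [show T1 r l (2*j-1) = 2*j-3 from by simp only [T1]; split_ifs <;> omega,
        show T1 r l 0 = 2*(r+l)-2 from by simp only [T1]; split_ifs <;> omega]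
      have e2 := EF1_even_hi r l (2*(r+l)-2) (by omega) (by omega) (by omega)
      rcases Nat.lt_or_ge (2*j-3) (r+l) with hQ | hQ
      · have e1 := EF1_odd_lo r l (2*j-3) (by omega) hQ
        simp only [DD]; rw [abs_le]; omega
      · have e1 := EF1_odd_hi r l (2*j-3) (by omega) hQ
        simp only [DD]; rw [abs_le]; omega
    · simp only [HH2, pv, cond_true, hv1, hv2]
      rw [show T2 r l (2*j-1) = 2*j-2*r from by simp only [T2]; split_ifs <;> omega,
        show T2 r l 0 = 2*(r+l)-(2*r-1) from by simp only [T2]; split_ifs <;> omega]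
      have e2 := EF2_odd_hi r l (2*(r+l)-(2*r-1)) (by omega) (by omega)
      rcases Nat.lt_or_ge (2*j-2*r) (r+l) with hP | hP
      · have e1 := EF2_even_lo r l (2*j-2*r) (by omega) (by omega) (by omega) hP
        simp only [DD]; rw [abs_le]; omega
      · have e1 := EF2_even_hi r l (2*j-2*r) (by omega) (by omega) (by omega) hP
        simp only [DD]; rw [abs_le]; omega

end PapAux

namespace PapAux

lemma Qouter {r l : ℕ} (hr : 1 ≤ r) (hrl : r ≤ l) {i : ℕ} (h1 : 1 ≤ i)
    (h2 : i ≤ 2 * (r + l) - 1) : Q r l (pu (2*(r+l)) i) (pu (2*(r+l)) (i+1)) := by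
  have hN : 4 ≤ 2 * (r + l) := by omega
  have hv1 : ((i : ZMod (2*(r+l)))).val = i := ZMod.val_cast_of_lt (by omega)
  rcases Nat.lt_or_ge (i+1) (2*(r+l)) with hc | hc
  · have hv2 : (((i+1 : ℕ) : ZMod (2*(r+l)))).val = i + 1 := ZMod.val_cast_of_lt hc
    refine ⟨chi_pu_ne_pu hv1 hv2 (by omega), ?_, ?_⟩ <;>
    · simp only [HH1, HH2, pu, cond_false, hv1, hv2, DD, T1, T2, add_zero]
      rw [abs_le]
      split_ifs <;> omega
  · have he : i + 1 = 2*(r+l) := by omega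
    have hv2 : (((i+1 : ℕ) : ZMod (2*(r+l)))).val = 0 := by
      rw [he]; exact val_N (by omega)
    refine ⟨chi_pu_ne_pu hv1 hv2 (by omega), ?_, ?_⟩ <;>
    · simp only [HH1, HH2, pu, cond_false, hv1, hv2, DD, T1, T2, add_zero]
      rw [abs_le]
      split_ifs <;> omega

lemma Qwrap {r l : ℕ} (hr : 1 ≤ r) (hrl : r ≤ l) :
    Q r l (pu (2*(r+l)) (2*(r+l))) (pu (2*(r+l)) 1) := by
  have hN : 4 ≤ 2 * (r + l) := by omega
  have hv1 : (((2*(r+l) : ℕ) : ZMod (2*(r+l)))).val = 0 := val_N (by omega)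
  have hv2 : ((1 : ℕ) : ZMod (2*(r+l))).val = 1 := ZMod.val_cast_of_lt (by omega)
  refine ⟨chi_pu_ne_pu hv1 hv2 (by omega), ?_, ?_⟩ <;>
  · simp only [HH1, HH2, pu, cond_false, hv1, hv2, DD, T1, T2, add_zero]
    rw [abs_le]
    split_ifs <;> omega

lemma Qspoke {r l : ℕ} (hr : 1 ≤ r) (hrl : r ≤ l) {i : ℕ} (h1 : 1 ≤ i)
    (h2 : i ≤ 2 * (r + l)) : Q r l (pu (2*(r+l)) i) (pv (2*(r+l)) i) := by
  refine ⟨chi_pu_ne_pv, ?_, ?_⟩ <;>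
  · simp only [HH1, HH2, pu, pv, cond_false, cond_true, EF1, EF2, add_zero]
    rw [abs_le]
    split_ifs <;> omega

end PapAux


namespace PapAux

variable {r l : ℕ}

/-- first special edge -/
def EE1 (r l : ℕ) : Sym2 (PapVert (2*(r+l))) :=
  s(pv (2*(r+l)) 2, pv (2*(r+l)) (2*r+2))

/-- second special edge -/
def EE2 (r l : ℕ) : Sym2 (PapVert (2*(r+l))) :=
  s(pv (2*(r+l)) (2*r-1), pv (2*(r+l)) (2*(r+l)-1))

lemma pv_inj (hr : 1 ≤ r) (hrl : r ≤ l) {a b : ℕ} (ha1 : 1 ≤ a) (ha : a ≤ 2*(r+l))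
    (hb1 : 1 ≤ b) (hb : b ≤ 2*(r+l)) (h : pv (2*(r+l)) a = pv (2*(r+l)) b) : a = b := by
  simp only [pv, Prod.mk.injEq, true_and] at h
  exact cast_inj (by omega) ha1 ha hb1 hb h

lemma EE1_ne_EE2 (hr : 1 ≤ r) (hrl : r ≤ l) : EE1 r l ≠ EE2 r l := by
  have hN : 4 ≤ 2*(r+l) := by omega
  intro h
  rw [EE1, EE2, Sym2.eq_iff] at h
  rcases h with ⟨h1, -⟩ | ⟨h1, -⟩ <;>
  · have := pv_inj hr hrl (by omega) (by omega) (by omega) (by omega) h1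
    omega

lemma adj_main (hr : 1 ≤ r) (hrl : r ≤ l) {a b : PapVert (2*(r+l))}
    (h : (papillon r l).Adj a b) :
    s(a, b) = EE1 r l ∨ s(a, b) = EE2 r l ∨ Q r l a b := by
  rw [papillon, fromEdgeSet_adj] at h
  obtain ⟨hm, -⟩ := h
  simp only [papillonEdges, Set.mem_setOf_eq, min_eq_left hrl] at hm
  rcases hm with ⟨i, h1, h2, he⟩ | he | ⟨i, h1, h2, he⟩ | ⟨i, h1, h2, he⟩ |
    ⟨i, h1, h2, h3, he⟩ | he | he
  · rw [Sym2.eq_iff] at he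
    rcases he with ⟨rfl, rfl⟩ | ⟨rfl, rfl⟩
    · exact Or.inr (Or.inr (Qouter hr hrl h1 h2))
    · exact Or.inr (Or.inr (Qouter hr hrl h1 h2).symm)
  · rw [Sym2.eq_iff] at he
    rcases he with ⟨rfl, rfl⟩ | ⟨rfl, rfl⟩
    · exact Or.inr (Or.inr (Qwrap hr hrl))
    · exact Or.inr (Or.inr (Qwrap hr hrl).symm)
  · rw [Sym2.eq_iff] at he
    rcases he with ⟨rfl, rfl⟩ | ⟨rfl, rfl⟩
    · exact Or.inr (Or.inr (Qspoke hr hrl h1 h2))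
    · exact Or.inr (Or.inr (Qspoke hr hrl h1 h2).symm)
  · rw [Sym2.eq_iff] at he
    rcases he with ⟨rfl, rfl⟩ | ⟨rfl, rfl⟩
    · exact Or.inr (Or.inr (Qrung hr hrl h1 h2))
    · exact Or.inr (Or.inr (Qrung hr hrl h1 h2).symm)
  · rw [Sym2.eq_iff] at he
    rcases he with ⟨rfl, rfl⟩ | ⟨rfl, rfl⟩
    · exact Or.inr (Or.inr (Qskip hr hrl h1 h2 h3))
    · exact Or.inr (Or.inr (Qskip hr hrl h1 h2 h3).symm)
  · exact Or.inl (by rw [he]; rfl)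
  · exact Or.inr (Or.inl (by rw [he]; rfl))

lemma hh1_v2 (hr : 1 ≤ r) (hrl : r ≤ l) : HH1 r l (pv (2*(r+l)) 2) = -1 := by
  have hv : ((2 : ℕ) : ZMod (2*(r+l))).val = 2 := ZMod.val_cast_of_lt (by omega)
  have hv' : (((2 : ℕ) : ZMod (2*(r+l)))).val = 2 := hv
  show DD r l (T1 r l ((2 : ZMod (2*(r+l))).val)) + _ = -1
  have h2 : ((2 : ZMod (2*(r+l)))).val = 2 := by
    have : ((2 : ZMod (2*(r+l)))) = ((2 : ℕ) : ZMod (2*(r+l))) := by push_cast; ring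
    rw [this, hv]
  simp only [HH1, pv, cond_true, h2, hv, DD, T1, EF1, le_refl, if_true]
  split_ifs <;> (try contradiction) <;> omega

lemma hh1_v2r2 (hr : 1 ≤ r) (hrl : r ≤ l) :
    HH1 r l (pv (2*(r+l)) (2*r+2)) = 2*(r:ℤ) + 1 := by
  rcases Nat.lt_or_ge (2*r+2) (2*(r+l)) with hc | hc
  · have hv : (((2*r+2 : ℕ) : ZMod (2*(r+l)))).val = 2*r+2 := ZMod.val_cast_of_lt hc
    simp only [HH1, pv, cond_true, hv, DD, T1, EF1]
    split_ifs <;> omega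
  · have he : 2*r+2 = 2*(r+l) := by omega
    have hv : (((2*r+2 : ℕ) : ZMod (2*(r+l)))).val = 0 := by
      rw [he]; exact val_N (by omega)
    simp only [HH1, pv, cond_true, hv, DD, T1, EF1]
    split_ifs <;> omega

lemma hh2_v2r1 (hr : 1 ≤ r) (hrl : r ≤ l) : HH2 r l (pv (2*(r+l)) (2*r-1)) = -1 := by
  have hv : (((2*r-1 : ℕ) : ZMod (2*(r+l)))).val = 2*r-1 := ZMod.val_cast_of_lt (by omega)
  simp only [HH2, pv, cond_true, hv, DD, T2, EF2]
  split_ifs <;> omega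

lemma hh2_vN1 (hr : 1 ≤ r) (hrl : r ≤ l) :
    HH2 r l (pv (2*(r+l)) (2*(r+l)-1)) = 2*(r:ℤ) + 1 := by
  have hv : (((2*(r+l)-1 : ℕ) : ZMod (2*(r+l)))).val = 2*(r+l)-1 :=
    ZMod.val_cast_of_lt (by omega)
  simp only [HH2, pv, cond_true, hv, DD, T2, EF2]
  split_ifs <;> omega

lemma jump1 (hr : 1 ≤ r) (hrl : r ≤ l) {x y : PapVert (2*(r+l))}
    (h : s(x, y) = EE1 r l) : |HH1 r l x - HH1 r l y| = 2*(r:ℤ) + 2 := by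
  rw [EE1, Sym2.eq_iff] at h
  rcases h with ⟨rfl, rfl⟩ | ⟨rfl, rfl⟩
  · rw [hh1_v2 hr hrl, hh1_v2r2 hr hrl]
    rw [show (-1 : ℤ) - (2*(r:ℤ)+1) = -(2*(r:ℤ)+2) by ring, abs_neg,
      abs_of_nonneg (by positivity)]
  · rw [hh1_v2 hr hrl, hh1_v2r2 hr hrl]
    rw [show (2*(r:ℤ)+1) - (-1 : ℤ) = 2*(r:ℤ)+2 by ring, abs_of_nonneg (by positivity)]

lemma jump2 (hr : 1 ≤ r) (hrl : r ≤ l) {x y : PapVert (2*(r+l))}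
    (h : s(x, y) = EE2 r l) : |HH2 r l x - HH2 r l y| = 2*(r:ℤ) + 2 := by
  rw [EE2, Sym2.eq_iff] at h
  rcases h with ⟨rfl, rfl⟩ | ⟨rfl, rfl⟩
  · rw [hh2_v2r1 hr hrl, hh2_vN1 hr hrl]
    rw [show (-1 : ℤ) - (2*(r:ℤ)+1) = -(2*(r:ℤ)+2) by ring, abs_neg,
      abs_of_nonneg (by positivity)]
  · rw [hh2_v2r1 hr hrl, hh2_vN1 hr hrl]
    rw [show (2*(r:ℤ)+1) - (-1 : ℤ) = 2*(r:ℤ)+2 by ring, abs_of_nonneg (by positivity)]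

lemma chi_EE1 (hr : 1 ≤ r) (hrl : r ≤ l) {x y : PapVert (2*(r+l))}
    (h : s(x, y) = EE1 r l) : CHI r l x = CHI r l y := by
  have key : CHI r l (pv (2*(r+l)) 2) = CHI r l (pv (2*(r+l)) (2*r+2)) := by
    by_contra hne
    rcases Nat.lt_or_ge (2*r+2) (2*(r+l)) with hc | hc
    · have hv : (((2*r+2 : ℕ) : ZMod (2*(r+l)))).val = 2*r+2 := ZMod.val_cast_of_lt hc
      have hv2 : (((2 : ℕ) : ZMod (2*(r+l)))).val = 2 := ZMod.val_cast_of_lt (by omega)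
      simp only [CHI, pv, cond_true, hv, hv2, add_right_inj, Ne] at hne
      rw [ZMod.natCast_eq_natCast_iff'] at hne
      omega
    · have he : 2*r+2 = 2*(r+l) := by omega
      have hv : (((2*r+2 : ℕ) : ZMod (2*(r+l)))).val = 0 := by
        rw [he]; exact val_N (by omega)
      have hv2 : (((2 : ℕ) : ZMod (2*(r+l)))).val = 2 := ZMod.val_cast_of_lt (by omega)
      simp only [CHI, pv, cond_true, hv, hv2, add_right_inj, Ne] at hne
      rw [ZMod.natCast_eq_natCast_iff'] at hne
      omega
  rw [EE1, Sym2.eq_iff] at h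
  rcases h with ⟨rfl, rfl⟩ | ⟨rfl, rfl⟩
  · exact key
  · exact key.symm

lemma chi_EE2 (hr : 1 ≤ r) (hrl : r ≤ l) {x y : PapVert (2*(r+l))}
    (h : s(x, y) = EE2 r l) : CHI r l x = CHI r l y := by
  have hv : (((2*r-1 : ℕ) : ZMod (2*(r+l)))).val = 2*r-1 := ZMod.val_cast_of_lt (by omega)
  have hv2 : (((2*(r+l)-1 : ℕ) : ZMod (2*(r+l)))).val = 2*(r+l)-1 :=
    ZMod.val_cast_of_lt (by omega)
  have key : CHI r l (pv (2*(r+l)) (2*r-1)) = CHI r l (pv (2*(r+l)) (2*(r+l)-1)) := by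
    simp only [CHI, pv, cond_true, hv, hv2, add_right_inj]
    rw [ZMod.natCast_eq_natCast_iff']
    omega
  rw [EE2, Sym2.eq_iff] at h
  rcases h with ⟨rfl, rfl⟩ | ⟨rfl, rfl⟩
  · exact key
  · exact key.symm

end PapAux

namespace PapAux

lemma walk0 {V : Type*} [DecidableEq V] {G : SimpleGraph V} (H : V → ℤ) (eA eB : Sym2 V)
    (hedge : ∀ {x y : V}, G.Adj x y → s(x, y) = eA ∨ s(x, y) = eB ∨ |H x - H y| ≤ 1) :
    ∀ {a b : V} (p : G.Walk a b), eA ∉ p.edges → eB ∉ p.edges →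
      |H a - H b| ≤ (p.length : ℤ) := by
  intro a b p
  induction p with
  | nil => simp
  | @cons a c b h q ih =>
    intro hA hB
    simp only [SimpleGraph.Walk.edges_cons, List.mem_cons, not_or] at hA hB
    have hstep : |H a - H c| ≤ 1 := by
      rcases hedge h with h' | h' | h'
      · exact absurd h'.symm hA.1
      · exact absurd h'.symm hB.1
      · exact h'
    have := ih hA.2 hB.2
    calc |H a - H b| ≤ |H a - H c| + |H c - H b| := abs_sub_le _ _ _
      _ ≤ 1 + q.length := add_le_add hstep this
      _ ≤ ((q.length + 1 : ℕ) : ℤ) := by push_cast; omega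
      _ = _ := by rw [SimpleGraph.Walk.length_cons]

lemma walk1 {V : Type*} [DecidableEq V] {G : SimpleGraph V} (H : V → ℤ) (eA eB : Sym2 V)
    (hedge : ∀ {x y : V}, G.Adj x y → s(x, y) = eA ∨ s(x, y) = eB ∨ |H x - H y| ≤ 1) :
    ∀ {a b : V} (p : G.Walk a b), p.edges.count eA = 1 → eB ∉ p.edges →
      ∃ x y : V, s(x, y) = eA ∧ |(H a - H b) - (H x - H y)| + 1 ≤ (p.length : ℤ) := by
  intro a b p
  induction p with
  | nil => intro h; simp at h
  | @cons a c b h q ih =>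
    intro hcnt hB
    rw [SimpleGraph.Walk.edges_cons, List.count_cons] at hcnt
    simp only [beq_iff_eq] at hcnt
    simp only [SimpleGraph.Walk.edges_cons, List.mem_cons, not_or] at hB
    rw [SimpleGraph.Walk.length_cons]
    by_cases hca : s(a, c) = eA
    · rw [if_pos hca] at hcnt
      have hq0 : eA ∉ q.edges := by
        rw [← List.count_eq_zero (a := eA)]; omega
      refine ⟨a, c, hca, ?_⟩
      have hb := walk0 H eA eB hedge q hq0 hB.2
      have : (H a - H b) - (H a - H c) = H c - H b := by ring
      rw [this]
      push_cast
      omega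
    · rw [if_neg hca] at hcnt
      have hstep : |H a - H c| ≤ 1 := by
        rcases hedge h with h' | h' | h'
        · exact absurd h' hca
        · exact absurd h'.symm hB.1
        · exact h'
      obtain ⟨x, y, hxy, hb⟩ := ih (by omega) hB.2
      refine ⟨x, y, hxy, ?_⟩
      have htri : |(H a - H b) - (H x - H y)| ≤ |H a - H c| + |(H c - H b) - (H x - H y)| := by
        have : (H a - H b) - (H x - H y) = (H a - H c) + ((H c - H b) - (H x - H y)) := by ring
        rw [this]; exact abs_add_le _ _
      push_cast
      omega

lemma chi_walk {r l : ℕ} (hr : 1 ≤ r) (hrl : r ≤ l) {a b : PapVert (2*(r+l))}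
    (p : (papillon r l).Walk a b) :
    CHI r l a + CHI r l b =
      (p.length : ZMod 2) + ((p.edges.count (EE1 r l) : ℕ) : ZMod 2)
        + ((p.edges.count (EE2 r l) : ℕ) : ZMod 2) := by
  induction p with
  | nil =>
    simp only [SimpleGraph.Walk.edges_nil, SimpleGraph.Walk.length_nil, List.count_nil,
      Nat.cast_zero, add_zero]
    have : ∀ z : ZMod 2, z + z = 0 := by decide
    rw [this]
  | @cons a c b h q ih =>
    have key : ∀ x y z : ZMod 2, (x + y) + (y + z) = x + z := by decide
    have hsplit : CHI r l a + CHI r l b = (CHI r l a + CHI r l c) + (CHI r l c + CHI r l b) :=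
      (key _ _ _).symm
    rw [hsplit, ih]
    rw [SimpleGraph.Walk.edges_cons, SimpleGraph.Walk.length_cons,
      List.count_cons, List.count_cons]
    simp only [beq_iff_eq]
    by_cases h1 : s(a, c) = EE1 r l
    · have h2 : s(a, c) ≠ EE2 r l := by rw [h1]; exact EE1_ne_EE2 hr hrl
      rw [if_pos h1, if_neg h2]
      have hcc : CHI r l a + CHI r l c = 0 := by
        rw [chi_EE1 hr hrl h1]
        have : ∀ z : ZMod 2, z + z = 0 := by decide
        rw [this]
      rw [hcc]
      push_cast
      have h20 : (2 : ZMod 2) = 0 := by decide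
      linear_combination (-1 : ZMod 2) * h20
    · by_cases h2 : s(a, c) = EE2 r l
      · rw [if_pos h2, if_neg h1]
        have hcc : CHI r l a + CHI r l c = 0 := by
          rw [chi_EE2 hr hrl h2]
          have : ∀ z : ZMod 2, z + z = 0 := by decide
          rw [this]
        rw [hcc]
        push_cast
        have h20 : (2 : ZMod 2) = 0 := by decide
        linear_combination (-1 : ZMod 2) * h20
      · rw [if_neg h1, if_neg h2]
        have hcc : CHI r l a + CHI r l c = 1 := by
          rcases adj_main hr hrl h with h' | h' | h'
          · exact absurd h' h1
          · exact absurd h' h2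
          · have : ∀ x y : ZMod 2, x ≠ y → x + y = 1 := by decide
            exact this _ _ h'.1
        rw [hcc]
        push_cast
        ring

end PapAux

namespace PapAux

lemma adj_outer {r l : ℕ} (hr : 1 ≤ r) (hrl : r ≤ l) {i : ℕ} (h1 : 1 ≤ i)
    (h2 : i ≤ 2*(r+l) - 1) :
    (papillon r l).Adj (pu (2*(r+l)) i) (pu (2*(r+l)) (i+1)) := by
  rw [papillon, fromEdgeSet_adj]
  constructor
  · exact Or.inl ⟨i, h1, h2, rfl⟩
  · intro hEq
    simp only [pu, Prod.mk.injEq, true_and] at hEq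
    have := cast_inj (show 0 < 2*(r+l) by omega) h1 (by omega) (by omega) (by omega) hEq
    omega

lemma adj_spoke {r l : ℕ} (hr : 1 ≤ r) (hrl : r ≤ l) {i : ℕ} (h1 : 1 ≤ i)
    (h2 : i ≤ 2*(r+l)) :
    (papillon r l).Adj (pu (2*(r+l)) i) (pv (2*(r+l)) i) := by
  rw [papillon, fromEdgeSet_adj]
  refine ⟨Or.inr (Or.inr (Or.inl ⟨i, h1, h2, rfl⟩)), ?_⟩
  intro hEq
  simp only [pu, pv, Prod.mk.injEq] at hEq
  exact Bool.noConfusion hEq.1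

lemma adj_inner {r l : ℕ} (hr : 1 ≤ r) (hrl : r ≤ l) :
    (papillon r l).Adj (pv (2*(r+l)) (2*r+2)) (pv (2*(r+l)) 2) := by
  rw [papillon, fromEdgeSet_adj]
  constructor
  · refine Or.inr (Or.inr (Or.inr (Or.inr (Or.inr (Or.inl ?_)))))
    rw [min_eq_left hrl, Sym2.eq_swap]
  · intro hEq
    have := pv_inj hr hrl (by omega) (by omega) (by omega) (by omega) hEq
    omega

lemma opath {r l : ℕ} (hr : 1 ≤ r) (hrl : r ≤ l) :
    ∀ j : ℕ, 2 ≤ j → j ≤ 2*(r+l) →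
      ∃ p : (papillon r l).Walk (pu (2*(r+l)) 2) (pu (2*(r+l)) j),
        p.length = j - 2 ∧
        p.support = (List.range (j-1)).map (fun t => pu (2*(r+l)) (2+t)) := by
  intro j
  induction j with
  | zero => omega
  | succ n ih =>
    intro hn2 hnN
    rcases Nat.lt_or_ge n 2 with hn | hn
    · -- n + 1 = 2
      have h2 : n = 1 := by omega
      subst h2
      exact ⟨SimpleGraph.Walk.nil, by simp, by rw [List.range_succ]; simp⟩
    · obtain ⟨p, hlen, hsup⟩ := ih hn (by omega)
      have hadj : (papillon r l).Adj (pu (2*(r+l)) n) (pu (2*(r+l)) (n+1)) :=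
        adj_outer hr hrl (by omega) (by omega)
      refine ⟨p.concat hadj, ?_, ?_⟩
      · rw [SimpleGraph.Walk.length_concat, hlen]; omega
      · rw [SimpleGraph.Walk.support_concat, hsup]
        rw [show n+1-1 = (n-2)+1+1 by omega, List.range_succ, List.map_append,
          show n-1 = (n-2)+1 by omega]
        simp only [List.concat_eq_append, List.map_cons, List.map_nil]
        rw [show 2+((n-2)+1) = n+1 by omega]

end PapAux

open PapAux in
/-- For all positive integers `r ≤ ℓ`, every odd cycle of the papillon graph `P_{r,ℓ}` has
length at least `2r+3`, and there is an odd cycle of length exactly `2r+3`; hence a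
shortest odd cycle of `P_{r,ℓ}` has length exactly `2r+3`. -/
theorem statement4 (r l : ℕ) (hr : 1 ≤ r) (hrl : r ≤ l) :
    (∀ (x : PapVert (2 * (r + l))) (c : (papillon r l).Walk x x),
        c.IsCycle → Odd c.length → 2 * r + 3 ≤ c.length)
      ∧ ∃ (x : PapVert (2 * (r + l))) (c : (papillon r l).Walk x x),
          c.IsCycle ∧ Odd c.length ∧ c.length = 2 * r + 3 := by
  have hN : 4 ≤ 2 * (r + l) := by omega
  constructor
  · -- lower bound
    intro x c hcyc hodd
    have hpar := chi_walk hr hrl c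
    have hz : ∀ z : ZMod 2, z + z = 0 := by decide
    rw [hz] at hpar
    have hdvd : (2 : ℕ) ∣ (c.length + c.edges.count (EE1 r l) + c.edges.count (EE2 r l)) := by
      rw [← ZMod.natCast_eq_zero_iff]
      push_cast
      rw [← hpar]
    have hnd := hcyc.edges_nodup
    have h1le := List.nodup_iff_count_le_one.mp hnd (EE1 r l)
    have h2le := List.nodup_iff_count_le_one.mp hnd (EE2 r l)
    obtain ⟨m, hm⟩ := hodd
    have hsplit : (c.edges.count (EE1 r l) = 1 ∧ c.edges.count (EE2 r l) = 0)
        ∨ (c.edges.count (EE1 r l) = 0 ∧ c.edges.count (EE2 r l) = 1) := by omega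
    rcases hsplit with ⟨hk1, hk2⟩ | ⟨hk1, hk2⟩
    · have hedge : ∀ {a b : PapVert (2*(r+l))}, (papillon r l).Adj a b →
          s(a, b) = EE1 r l ∨ s(a, b) = EE2 r l ∨ |HH1 r l a - HH1 r l b| ≤ 1 := by
        intro a b h
        rcases adj_main hr hrl h with h' | h' | h'
        · exact Or.inl h'
        · exact Or.inr (Or.inl h')
        · exact Or.inr (Or.inr h'.2.1)
      obtain ⟨x', y', hxy, hb⟩ := walk1 (HH1 r l) (EE1 r l) (EE2 r l) hedge c hk1
        (List.count_eq_zero.mp hk2)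
      have hrw : HH1 r l x - HH1 r l x - (HH1 r l x' - HH1 r l y')
          = -(HH1 r l x' - HH1 r l y') := by ring
      rw [hrw, abs_neg, jump1 hr hrl hxy] at hb
      omega
    · have hedge : ∀ {a b : PapVert (2*(r+l))}, (papillon r l).Adj a b →
          s(a, b) = EE2 r l ∨ s(a, b) = EE1 r l ∨ |HH2 r l a - HH2 r l b| ≤ 1 := by
        intro a b h
        rcases adj_main hr hrl h with h' | h' | h'
        · exact Or.inr (Or.inl h')
        · exact Or.inl h'
        · exact Or.inr (Or.inr h'.2.2)
      obtain ⟨x', y', hxy, hb⟩ := walk1 (HH2 r l) (EE2 r l) (EE1 r l) hedge c hk2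
        (List.count_eq_zero.mp hk1)
      have hrw : HH2 r l x - HH2 r l x - (HH2 r l x' - HH2 r l y')
          = -(HH2 r l x' - HH2 r l y') := by ring
      rw [hrw, abs_neg, jump2 hr hrl hxy] at hb
      omega
  · -- existence
    obtain ⟨p, hlen, hsup⟩ := opath hr hrl (2*r+2) (by omega) (by omega)
    have hspoke : (papillon r l).Adj (pu (2*(r+l)) (2*r+2)) (pv (2*(r+l)) (2*r+2)) :=
      adj_spoke hr hrl (by omega) (by omega)
    have hinner := adj_inner hr hrl
    have hadj2 : (papillon r l).Adj (pv (2*(r+l)) 2) (pu (2*(r+l)) 2) :=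
      (adj_spoke hr hrl (by omega) (by omega)).symm
    set tailw : (papillon r l).Walk (pu (2*(r+l)) (2*r+2)) (pv (2*(r+l)) 2) :=
      SimpleGraph.Walk.cons hspoke (SimpleGraph.Walk.cons hinner SimpleGraph.Walk.nil)
      with htailw
    set q := p.append tailw with hq
    have hqpath : q.IsPath := by
      rw [SimpleGraph.Walk.isPath_def, hq, SimpleGraph.Walk.support_append, hsup, htailw]
      simp only [SimpleGraph.Walk.support_cons, SimpleGraph.Walk.support_nil, List.tail_cons]
      rw [List.nodup_append]
      refine ⟨?_, ?_, ?_⟩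
      · refine List.Nodup.map_on ?_ List.nodup_range
        intro a ha b hb hab
        rw [List.mem_range] at ha hb
        simp only [pu, Prod.mk.injEq, true_and] at hab
        have := cast_inj (show 0 < 2*(r+l) by omega) (show 1 ≤ 2+a by omega) (by omega)
          (show 1 ≤ 2+b by omega) (by omega) hab
        omega
      · simp only [List.nodup_cons, List.mem_singleton, List.not_mem_nil, not_false_iff,
          List.nodup_nil, and_true]
        intro h
        have := pv_inj hr hrl (by omega) (by omega) (by omega) (by omega) h
        omega
      · intro a ha b hb hab
        subst hab
        obtain ⟨t, -, rfl⟩ := List.mem_map.mp ha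
        rcases List.mem_cons.mp hb with h | h
        · simp [pu, pv] at h
        · rcases List.mem_cons.mp h with h' | h'
          · simp [pu, pv] at h'
          · simp at h'
    have hqe : s(pv (2*(r+l)) 2, pu (2*(r+l)) 2) ∉ q.edges := by
      rw [hq, SimpleGraph.Walk.edges_append, htailw]
      simp only [SimpleGraph.Walk.edges_cons, SimpleGraph.Walk.edges_nil]
      intro hmem
      rcases List.mem_append.mp hmem with h | h
      · have hs := SimpleGraph.Walk.fst_mem_support_of_mem_edges p h
        rw [hsup] at hs
        obtain ⟨t, -, ht⟩ := List.mem_map.mp hs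
        simp [pu, pv] at ht
      · rcases List.mem_cons.mp h with h' | h'
        · rw [Sym2.eq_iff] at h'
          rcases h' with ⟨h1, -⟩ | ⟨h1, -⟩
          · simp [pu, pv] at h1
          · have := pv_inj hr hrl (by omega) (by omega) (by omega) (by omega) h1
            omega
        · rcases List.mem_cons.mp h' with h'' | h''
          · rw [Sym2.eq_iff] at h''
            rcases h'' with ⟨-, h2⟩ | ⟨-, h2⟩
            · simp [pu, pv] at h2
            · simp [pu, pv] at h2
          · simp at h''
    have hcyc : (SimpleGraph.Walk.cons hadj2 q).IsCycle :=
      SimpleGraph.Path.cons_isCycle ⟨q, hqpath⟩ hadj2 hqe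
    have hlenc : (SimpleGraph.Walk.cons hadj2 q).length = 2*r+3 := by
      rw [SimpleGraph.Walk.length_cons, hq, SimpleGraph.Walk.length_append, hlen, htailw]
      simp only [SimpleGraph.Walk.length_cons, SimpleGraph.Walk.length_nil]
      omega
    exact ⟨pv (2*(r+l)) 2, SimpleGraph.Walk.cons hadj2 q, hcyc,
      by rw [hlenc, Nat.odd_iff]; omega, hlenc⟩
end

section
/- For all positive integers r and ℓ, the papillon graph P_{r,ℓ} admits a graph automorphism ψ that maps the set of outer vertices {u_1,…,u_{2r+2ℓ}} bijectively onto the set of inner vertices {v_1,…,v_{2r+2ℓ}} and vice versa, maps every edge of the outer cycle to an edge of the inner cycle and every edge of the inner cycle to an edge of the outer cycle, and maps every spoke u_i v_i to a spoke. -/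
open SimpleGraph


def pf (s N a : ℕ) : ℕ :=
  if a = 0 then (if 2*s+2 = N then 0 else 2*s+2)
  else if a = 2*s+2 then 0
  else if a % 2 = 1 then (if a ≤ 2*s then a+1 else 2*s+N-a)
  else if a ≤ 2*s then a-1 else 2*s+2+N-a

lemma pf_lt (s N a : ℕ) (hs : 1 ≤ s) (hsN : 2*s+2 ≤ N) (ha : a < N) : pf s N a < N := by
  unfold pf; split_ifs <;> omega

lemma pf_invol (s N a : ℕ) (hs : 1 ≤ s) (hsN : 2*s+2 ≤ N) (hN2 : N % 2 = 0) (ha : a < N) :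
    pf s N (pf s N a) = a := by
  have h1 : pf s N a = if a = 0 then (if 2*s+2 = N then 0 else 2*s+2)
      else if a = 2*s+2 then 0
      else if a % 2 = 1 then (if a ≤ 2*s then a+1 else 2*s+N-a)
      else if a ≤ 2*s then a-1 else 2*s+2+N-a := rfl
  set b := pf s N a with hb
  have h2 : pf s N b = if b = 0 then (if 2*s+2 = N then 0 else 2*s+2)
      else if b = 2*s+2 then 0
      else if b % 2 = 1 then (if b ≤ 2*s then b+1 else 2*s+N-b)
      else if b ≤ 2*s then b-1 else 2*s+2+N-b := rfl
  clear_value b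
  rw [h2]
  split_ifs at h1 <;> split_ifs <;> omega

lemma cast_eq_aux (N a b : ℕ) (h : a = b ∨ (a = 0 ∧ b = N) ∨ (a = N ∧ b = 0)) :
    (a : ZMod N) = b := by
  rcases h with h | ⟨h1, h2⟩ | ⟨h1, h2⟩
  · rw [h]
  · subst h1; subst h2; simp [ZMod.natCast_self]
  · subst h1; subst h2; simp [ZMod.natCast_self]

lemma sym2_pv_eq (N a b c d : ℕ)
    (h : ((a : ZMod N) = c ∧ (b : ZMod N) = d) ∨ ((a : ZMod N) = d ∧ (b : ZMod N) = c)) :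
    s(pv N a, pv N b) = s(pv N c, pv N d) := by
  unfold pv
  rcases h with ⟨h1, h2⟩ | ⟨h1, h2⟩ <;> rw [h1, h2]
  exact Sym2.eq_swap

lemma sym2_pu_eq (N a b c d : ℕ)
    (h : ((a : ZMod N) = c ∧ (b : ZMod N) = d) ∨ ((a : ZMod N) = d ∧ (b : ZMod N) = c)) :
    s(pu N a, pu N b) = s(pu N c, pu N d) := by
  unfold pu
  rcases h with ⟨h1, h2⟩ | ⟨h1, h2⟩ <;> rw [h1, h2]
  exact Sym2.eq_swap

lemma sym2_spoke_eq' (N a b : ℕ) (h : (a : ZMod N) = b) :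
    s(pu N a, pv N a) = s(pu N b, pv N b) := by
  unfold pu pv; rw [h]

lemma sym2_spoke_eq (N a b : ℕ) (h : (a : ZMod N) = b) :
    s(pv N a, pu N a) = s(pu N b, pv N b) := by
  unfold pu pv; rw [h]; exact Sym2.eq_swap


def papF (r l : ℕ) : PapVert (2*(r+l)) → PapVert (2*(r+l)) :=
  fun x => (!x.1, ((pf (min r l) (2*(r+l)) x.2.val : ℕ) : ZMod (2*(r+l))))

lemma papF_invol (r l : ℕ) (hr : 1 ≤ r) (hl : 1 ≤ l) : Function.Involutive (papF r l) := by
  haveI : NeZero (2*(r+l)) := ⟨by omega⟩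
  have hs1 : 1 ≤ (min r l) := le_min hr hl
  have hsr := Nat.min_le_left r l
  intro x
  cases x with
  | mk b i =>
    unfold papF
    simp only [Bool.not_not]
    have h1 : i.val < (2*(r+l)) := ZMod.val_lt i
    have h2 : pf (min r l) (2*(r+l)) i.val < (2*(r+l)) := pf_lt _ _ _ hs1 (by omega) h1
    congr 1
    rw [ZMod.val_natCast, Nat.mod_eq_of_lt h2, pf_invol _ _ _ hs1 (by omega) (by omega) h1]
    exact ZMod.natCast_rightInverse i

lemma papF_pu (r l : ℕ) (hr : 1 ≤ r) (hl : 1 ≤ l) (i : ℕ) :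
    papF r l (pu (2*(r+l)) i) = pv (2*(r+l)) (pf (min r l) (2*(r+l)) (i % (2*(r+l)))) := by
  haveI : NeZero (2*(r+l)) := ⟨by omega⟩
  unfold papF pu pv
  simp [ZMod.val_natCast]

lemma papF_pv (r l : ℕ) (hr : 1 ≤ r) (hl : 1 ≤ l) (i : ℕ) :
    papF r l (pv (2*(r+l)) i) = pu (2*(r+l)) (pf (min r l) (2*(r+l)) (i % (2*(r+l)))) := by
  haveI : NeZero (2*(r+l)) := ⟨by omega⟩
  unfold papF pu pv
  simp [ZMod.val_natCast]

set_option maxHeartbeats 3200000 in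
lemma papF_edge (r l : ℕ) (hr : 1 ≤ r) (hl : 1 ≤ l) (x y : PapVert (2*(r+l)))
    (h : s(x, y) ∈ papillonEdges r l) :
    s(papF r l x, papF r l y) ∈ papillonEdges r l := by
  have hs1 : 1 ≤ (min r l) := le_min hr hl
  have hsr := Nat.min_le_left r l
  have hsl := Nat.min_le_right r l
  -- family 1 : outer edges
  have key1 : ∀ i : ℕ, 1 ≤ i → i ≤ (2*(r+l)) - 1 →
      s(papF r l (pu (2*(r+l)) i), papF r l (pu (2*(r+l)) (i+1))) ∈ papillonEdges r l := by
    intro i h1 h2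
    rw [papF_pu r l hr hl, papF_pu r l hr hl]
    simp only [papillonEdges, Set.mem_setOf_eq]
    have hmi : i % (2*(r+l)) = i := Nat.mod_eq_of_lt (by omega)
    rw [hmi]
    rcases (show (i % 2 = 1 ∧ i ≤ 2*(min r l)-1) ∨ (i % 2 = 0 ∧ 2 ≤ i ∧ i ≤ 2*(min r l)-2)
        ∨ i = 2*(min r l) ∨ (i % 2 = 1 ∧ 2*(min r l)+1 ≤ i) ∨ (i % 2 = 0 ∧ 2*(min r l)+2 ≤ i) from by omega)
      with ⟨ho, hb⟩ | ⟨ho, hb, hb2⟩ | he | ⟨ho, hb⟩ | ⟨ho, hb⟩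
    · rw [Nat.mod_eq_of_lt (show i+1 < (2*(r+l)) by omega)]
      refine Or.inr (Or.inr (Or.inr (Or.inl ⟨(i+1)/2, by omega, by omega, ?_⟩)))
      apply sym2_pv_eq; right
      constructor
      · apply cast_eq_aux; unfold pf; split_ifs <;> first | contradiction | omega
      · apply cast_eq_aux; unfold pf; split_ifs <;> first | contradiction | omega
    · rw [Nat.mod_eq_of_lt (show i+1 < (2*(r+l)) by omega)]
      refine Or.inr (Or.inr (Or.inr (Or.inr (Or.inl ⟨i/2, by omega, by omega, by omega, ?_⟩))))
      apply sym2_pv_eq; left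
      constructor
      · apply cast_eq_aux; unfold pf; split_ifs <;> first | contradiction | omega
      · apply cast_eq_aux; unfold pf; split_ifs <;> first | contradiction | omega
    · rw [Nat.mod_eq_of_lt (show i+1 < (2*(r+l)) by omega)]
      refine Or.inr (Or.inr (Or.inr (Or.inr (Or.inr (Or.inr ?_)))))
      apply sym2_pv_eq; left
      constructor
      · apply cast_eq_aux; unfold pf; split_ifs <;> first | contradiction | omega
      · apply cast_eq_aux; unfold pf; split_ifs <;> first | contradiction | omega
    · refine Or.inr (Or.inr (Or.inr (Or.inl ⟨(2*(min r l)+(2*(r+l))+1-i)/2, by omega, by omega, ?_⟩)))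
      apply sym2_pv_eq; left
      constructor
      · apply cast_eq_aux; unfold pf; split_ifs <;> first | contradiction | omega
      · rcases eq_or_ne (i+1) (2*(r+l)) with he2 | hne2
        · rw [he2, Nat.mod_self]; apply cast_eq_aux; unfold pf; split_ifs <;> first | contradiction | omega
        · rw [Nat.mod_eq_of_lt (by omega)]; apply cast_eq_aux; unfold pf; split_ifs <;> first | contradiction | omega
    · rw [Nat.mod_eq_of_lt (show i+1 < (2*(r+l)) by omega)]
      refine Or.inr (Or.inr (Or.inr (Or.inr (Or.inl
        ⟨(2*(min r l)+(2*(r+l))-i)/2, by omega, by omega, by omega, ?_⟩))))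
      apply sym2_pv_eq; right
      constructor
      · apply cast_eq_aux; unfold pf; split_ifs <;> first | contradiction | omega
      · apply cast_eq_aux; unfold pf; split_ifs <;> first | contradiction | omega
  -- family 2 : closing outer edge
  have key2 : s(papF r l (pu (2*(r+l)) (2*(r+l))), papF r l (pu (2*(r+l)) 1)) ∈ papillonEdges r l := by
    rw [papF_pu r l hr hl, papF_pu r l hr hl]
    simp only [papillonEdges, Set.mem_setOf_eq]
    rw [Nat.mod_self, Nat.mod_eq_of_lt (show 1 < (2*(r+l)) by omega)]
    refine Or.inr (Or.inr (Or.inr (Or.inr (Or.inr (Or.inl ?_)))))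
    apply sym2_pv_eq; right
    constructor
    · apply cast_eq_aux; unfold pf; split_ifs <;> first | contradiction | omega
    · apply cast_eq_aux; unfold pf; split_ifs <;> first | contradiction | omega
  -- family 3 : spokes
  have key3 : ∀ i : ℕ, 1 ≤ i → i ≤ (2*(r+l)) →
      s(papF r l (pu (2*(r+l)) i), papF r l (pv (2*(r+l)) i)) ∈ papillonEdges r l := by
    intro i h1 h2
    rw [papF_pu r l hr hl, papF_pv r l hr hl]
    simp only [papillonEdges, Set.mem_setOf_eq]
    have hlt : pf (min r l) (2*(r+l)) (i % (2*(r+l))) < (2*(r+l)) :=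
      pf_lt _ _ _ hs1 (by omega) (Nat.mod_lt _ (by omega))
    refine Or.inr (Or.inr (Or.inl ⟨if pf (min r l) (2*(r+l)) (i % (2*(r+l))) = 0 then (2*(r+l)) else pf (min r l) (2*(r+l)) (i % (2*(r+l))),
      by split_ifs <;> first | contradiction | omega, by split_ifs <;> first | contradiction | omega, ?_⟩))
    rw [Sym2.eq_swap]
    apply sym2_spoke_eq'
    apply cast_eq_aux
    split_ifs <;> first | contradiction | omega
  -- family 4 : inner pair edges
  have key4 : ∀ i : ℕ, 1 ≤ i → i ≤ r + l →
      s(papF r l (pv (2*(r+l)) (2*i-1)), papF r l (pv (2*(r+l)) (2*i))) ∈ papillonEdges r l := by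
    intro i h1 h2
    rw [papF_pv r l hr hl, papF_pv r l hr hl]
    simp only [papillonEdges, Set.mem_setOf_eq]
    rw [Nat.mod_eq_of_lt (show 2*i-1 < (2*(r+l)) by omega)]
    rcases le_or_gt i (min r l) with hc | hc
    · rw [Nat.mod_eq_of_lt (show 2*i < (2*(r+l)) by omega)]
      refine Or.inl ⟨2*i-1, by omega, by omega, ?_⟩
      apply sym2_pu_eq; right
      constructor
      · apply cast_eq_aux; unfold pf; split_ifs <;> first | contradiction | omega
      · apply cast_eq_aux; unfold pf; split_ifs <;> first | contradiction | omega
    · refine Or.inl ⟨2*(min r l)+(2*(r+l))+1-2*i, by omega, by omega, ?_⟩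
      apply sym2_pu_eq; left
      constructor
      · apply cast_eq_aux; unfold pf; split_ifs <;> first | contradiction | omega
      · rcases eq_or_ne (2*i) (2*(r+l)) with he2 | hne2
        · rw [he2, Nat.mod_self]; apply cast_eq_aux; unfold pf; split_ifs <;> first | contradiction | omega
        · rw [Nat.mod_eq_of_lt (by omega)]; apply cast_eq_aux; unfold pf; split_ifs <;> first | contradiction | omega
  -- family 5 : inner cross edges
  have key5 : ∀ i : ℕ, 1 ≤ i → i ≤ r + l - 1 → i ≠ (min r l) →
      s(papF r l (pv (2*(r+l)) (2*i-1)), papF r l (pv (2*(r+l)) (2*i+2))) ∈ papillonEdges r l := by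
    intro i h1 h2 h3
    rw [papF_pv r l hr hl, papF_pv r l hr hl]
    simp only [papillonEdges, Set.mem_setOf_eq]
    rw [Nat.mod_eq_of_lt (show 2*i-1 < (2*(r+l)) by omega)]
    rcases lt_or_gt_of_ne h3 with hc | hc
    · rw [Nat.mod_eq_of_lt (show 2*i+2 < (2*(r+l)) by omega)]
      refine Or.inl ⟨2*i, by omega, by omega, ?_⟩
      apply sym2_pu_eq; left
      constructor
      · apply cast_eq_aux; unfold pf; split_ifs <;> first | contradiction | omega
      · apply cast_eq_aux; unfold pf; split_ifs <;> first | contradiction | omega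
    · refine Or.inl ⟨2*(min r l)+(2*(r+l))-2*i, by omega, by omega, ?_⟩
      apply sym2_pu_eq; right
      constructor
      · apply cast_eq_aux; unfold pf; split_ifs <;> first | contradiction | omega
      · rcases eq_or_ne (2*i+2) (2*(r+l)) with he2 | hne2
        · rw [he2, Nat.mod_self]; apply cast_eq_aux; unfold pf; split_ifs <;> first | contradiction | omega
        · rw [Nat.mod_eq_of_lt (by omega)]; apply cast_eq_aux; unfold pf; split_ifs <;> first | contradiction | omega
  -- family 6
  have key6 : s(papF r l (pv (2*(r+l)) 2), papF r l (pv (2*(r+l)) (2*(min r l)+2))) ∈ papillonEdges r l := by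
    rw [papF_pv r l hr hl, papF_pv r l hr hl]
    simp only [papillonEdges, Set.mem_setOf_eq]
    rw [Nat.mod_eq_of_lt (show 2 < (2*(r+l)) by omega)]
    refine Or.inr (Or.inl ?_)
    rcases eq_or_ne (2*(min r l)+2) (2*(r+l)) with he2 | hne2
    · rw [he2, Nat.mod_self]
      apply sym2_pu_eq; right
      constructor
      · apply cast_eq_aux; unfold pf; split_ifs <;> first | contradiction | omega
      · apply cast_eq_aux; unfold pf; split_ifs <;> first | contradiction | omega
    · rw [Nat.mod_eq_of_lt (by omega)]
      apply sym2_pu_eq; right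
      constructor
      · apply cast_eq_aux; unfold pf; split_ifs <;> first | contradiction | omega
      · apply cast_eq_aux; unfold pf; split_ifs <;> first | contradiction | omega
  -- family 7
  have key7 : s(papF r l (pv (2*(r+l)) (2*(min r l)-1)), papF r l (pv (2*(r+l)) ((2*(r+l))-1))) ∈ papillonEdges r l := by
    rw [papF_pv r l hr hl, papF_pv r l hr hl]
    simp only [papillonEdges, Set.mem_setOf_eq]
    rw [Nat.mod_eq_of_lt (show 2*(min r l)-1 < (2*(r+l)) by omega),
      Nat.mod_eq_of_lt (show (2*(r+l))-1 < (2*(r+l)) by omega)]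
    refine Or.inl ⟨2*(min r l), by omega, by omega, ?_⟩
    apply sym2_pu_eq; left
    constructor
    · apply cast_eq_aux; unfold pf; split_ifs <;> first | contradiction | omega
    · apply cast_eq_aux; unfold pf; split_ifs <;> first | contradiction | omega
  -- dispatch
  simp only [papillonEdges, Set.mem_setOf_eq] at h
  rcases h with ⟨i, h1, h2, he⟩ | he | ⟨i, h1, h2, he⟩ | ⟨i, h1, h2, he⟩
    | ⟨i, h1, h2, h3, he⟩ | he | he <;> rw [Sym2.eq_iff] at he
  · rcases he with ⟨hx, hy⟩ | ⟨hx, hy⟩ <;> subst hx <;> subst hy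
    · exact key1 i h1 h2
    · rw [Sym2.eq_swap]; exact key1 i h1 h2
  · rcases he with ⟨hx, hy⟩ | ⟨hx, hy⟩ <;> subst hx <;> subst hy
    · exact key2
    · rw [Sym2.eq_swap]; exact key2
  · rcases he with ⟨hx, hy⟩ | ⟨hx, hy⟩ <;> subst hx <;> subst hy
    · exact key3 i h1 h2
    · rw [Sym2.eq_swap]; exact key3 i h1 h2
  · rcases he with ⟨hx, hy⟩ | ⟨hx, hy⟩ <;> subst hx <;> subst hy
    · exact key4 i h1 h2
    · rw [Sym2.eq_swap]; exact key4 i h1 h2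
  · rcases he with ⟨hx, hy⟩ | ⟨hx, hy⟩ <;> subst hx <;> subst hy
    · exact key5 i h1 h2 h3
    · rw [Sym2.eq_swap]; exact key5 i h1 h2 h3
  · rcases he with ⟨hx, hy⟩ | ⟨hx, hy⟩ <;> subst hx <;> subst hy
    · exact key6
    · rw [Sym2.eq_swap]; exact key6
  · rcases he with ⟨hx, hy⟩ | ⟨hx, hy⟩ <;> subst hx <;> subst hy
    · exact key7
    · rw [Sym2.eq_swap]; exact key7


set_option maxHeartbeats 1600000 in
/-- The papillon graph `P_{r,ℓ}` admits an automorphism `ψ` that maps the outer vertices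
onto the inner vertices and vice versa (hence maps every outer-cycle edge to an
inner-cycle edge and every inner-cycle edge to an outer-cycle edge), and maps every
spoke `u_i v_i` to a spoke `u_j v_j`. -/
theorem statement7 (r l : ℕ) (hr : 1 ≤ r) (hl : 1 ≤ l) :
    ∃ ψ : papillon r l ≃g papillon r l,
      (∀ x : PapVert (2 * (r + l)), x.1 = false → (ψ x).1 = true) ∧
      (∀ x : PapVert (2 * (r + l)), x.1 = true → (ψ x).1 = false) ∧
      (∀ i, 1 ≤ i → i ≤ 2 * (r + l) →
        ∃ j, 1 ≤ j ∧ j ≤ 2 * (r + l) ∧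
          ψ (pu (2 * (r + l)) i) = pv (2 * (r + l)) j ∧
          ψ (pv (2 * (r + l)) i) = pu (2 * (r + l)) j) := by
  haveI : NeZero (2*(r+l)) := ⟨by omega⟩
  have hs1 : 1 ≤ (min r l) := le_min hr hl
  have hsr := Nat.min_le_left r l
  have hinv : Function.Involutive (papF r l) := papF_invol r l hr hl
  have hadj : ∀ x y, (papillon r l).Adj x y → (papillon r l).Adj (papF r l x) (papF r l y) := by
    intro x y hxy
    simp only [papillon, SimpleGraph.fromEdgeSet_adj] at hxy ⊢
    exact ⟨papF_edge r l hr hl x y hxy.1, fun hc => hxy.2 (hinv.injective hc)⟩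
  refine ⟨⟨hinv.toPerm, ?_⟩, ?_, ?_, ?_⟩
  · intro a b
    constructor
    · intro h2
      have h3 := hadj _ _ h2
      simp only [Function.Involutive.coe_toPerm] at h3
      rwa [hinv a, hinv b] at h3
    · intro h2
      simpa only [Function.Involutive.coe_toPerm] using hadj a b h2
  · intro x hx
    show (papF r l x).1 = true
    simp [papF, hx]
  · intro x hx
    show (papF r l x).1 = false
    simp [papF, hx]
  · intro i h1 h2
    have hlt : pf (min r l) (2*(r+l)) (i % (2*(r+l))) < (2*(r+l)) :=
      pf_lt _ _ _ hs1 (by omega) (Nat.mod_lt _ (by omega))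
    refine ⟨if pf (min r l) (2*(r+l)) (i % (2*(r+l))) = 0 then (2*(r+l)) else pf (min r l) (2*(r+l)) (i % (2*(r+l))),
      by split_ifs <;> first | contradiction | omega, by split_ifs <;> first | contradiction | omega, ?_, ?_⟩
    · show papF r l (pu (2*(r+l)) i) = _
      rw [papF_pu r l hr hl]
      unfold pv
      exact congrArg (fun z => ((true, z) : PapVert (2*(r+l))))
        (cast_eq_aux _ _ _ (by split_ifs <;> first | contradiction | omega))
    · show papF r l (pv (2*(r+l)) i) = _
      rw [papF_pv r l hr hl]
      unfold pu
      exact congrArg (fun z => ((false, z) : PapVert (2*(r+l))))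
        (cast_eq_aux _ _ _ (by split_ifs <;> first | contradiction | omega))
end

section
/- For all positive integers r and ℓ, every 2-factor of the papillon graph P_{r,ℓ} contains only cycles of even length; that is, every papillon graph is E2F. -/
open SimpleGraph


section PapAuxSection

section GeneralWalk
variable {V : Type*} {G : SimpleGraph V}

lemma head_edge_mem {a b : V} (p : G.Walk a b) (h : p.edges ≠ []) : a ∈ p.edges.head h := by
  cases p with
  | nil => simp at h
  | cons h' q => simp

lemma last_edge_mem {a b : V} (p : G.Walk a b) (h : p.edges ≠ []) : b ∈ p.edges.getLast h := by
  have h2 : p.reverse.edges ≠ [] := by simpa [Walk.edges_reverse] using h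
  have h3 := head_edge_mem p.reverse h2
  have h4 : p.reverse.edges.head h2 = p.edges.getLast h := by
    simp only [Walk.edges_reverse]
    exact List.head_reverse _
  rwa [h4] at h3

lemma end_mem_support_tail {a : V} (p : G.Walk a a) (hp : ¬ p.Nil) : a ∈ p.support.tail := by
  cases p with
  | nil => simp at hp
  | cons h q => simpa using q.end_mem_support

lemma cycle_two_edges [DecidableEq V] {x v : V} {c : G.Walk x x} (hc : c.IsCycle)
    (hv : v ∈ c.support) :
    ∃ d₁ d₂, d₁ ≠ d₂ ∧ d₁ ∈ c.edges ∧ d₂ ∈ c.edges ∧ v ∈ d₁ ∧ v ∈ d₂ := by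
  have hcyc := hc.rotate hv
  have hlen : 3 ≤ (c.rotate v hv).length := hcyc.three_le_length
  have hne : (c.rotate v hv).edges ≠ [] := by
    intro h
    have := (c.rotate v hv).length_edges
    rw [h, List.length_nil] at this; omega
  have hmem : ∀ e, e ∈ (c.rotate v hv).edges → e ∈ c.edges := by
    intro e he
    exact (c.rotate_edges v hv).mem_iff.mp he
  refine ⟨(c.rotate v hv).edges.head hne, (c.rotate v hv).edges.getLast hne, ?_,
    hmem _ (List.head_mem hne), hmem _ (List.getLast_mem hne),
    head_edge_mem _ hne, last_edge_mem _ hne⟩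
  have hnd : (c.rotate v hv).edges.Nodup := hcyc.isTrail.edges_nodup
  have hL : 2 ≤ (c.rotate v hv).edges.length := by
    rw [(c.rotate v hv).length_edges]; omega
  rw [List.head_eq_getElem_zero hne, List.getLast_eq_getElem]
  intro heq
  have := (List.Nodup.getElem_inj_iff hnd).mp heq
  omega

end GeneralWalk

lemma even_card_of_involution {α : Type*} [DecidableEq α] (s : Finset α) (g : α → α)
    (hmem : ∀ v ∈ s, g v ∈ s) (hinv : ∀ v ∈ s, g (g v) = v) (hgne : ∀ v ∈ s, g v ≠ v) :
    Even s.card := by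
  classical
  generalize hn : s.card = n
  induction n using Nat.strong_induction_on generalizing s with
  | _ n ih =>
  rcases Finset.eq_empty_or_nonempty s with rfl | ⟨a, ha⟩
  · simp only [Finset.card_empty] at hn; exact hn ▸ Even.zero
  · have hga : g a ∈ s := hmem a ha
    have hnea : g a ≠ a := hgne a ha
    set t := (s.erase a).erase (g a) with ht
    have hga' : g a ∈ s.erase a := Finset.mem_erase.mpr ⟨hnea, hga⟩
    have hcard : t.card + 2 = n := by
      rw [ht, Finset.card_erase_of_mem hga', Finset.card_erase_of_mem ha, hn]
      have h2 : 2 ≤ s.card := by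
        have := Finset.one_lt_card_iff.mpr ⟨g a, a, hga, ha, hnea⟩
        omega
      omega
    have htmem : ∀ v, v ∈ t ↔ (v ∈ s ∧ v ≠ a ∧ v ≠ g a) := by
      intro v
      simp only [ht, Finset.mem_erase]
      tauto
    have h1 : ∀ v ∈ t, g v ∈ t := by
      intro v hv
      obtain ⟨hvs, hva, hvga⟩ := (htmem v).mp hv
      refine (htmem (g v)).mpr ⟨hmem v hvs, ?_, ?_⟩
      · intro h
        have := hinv v hvs
        rw [h] at this
        exact hvga this.symm
      · intro h
        have : g (g v) = g (g a) := by rw [h]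
        rw [hinv v hvs, hinv a ha] at this
        exact hva this
    have h2 : ∀ v ∈ t, g (g v) = v := fun v hv => hinv v ((htmem v).mp hv).1
    have h3 : ∀ v ∈ t, g v ≠ v := fun v hv => hgne v ((htmem v).mp hv).1
    obtain ⟨k, hk⟩ := ih t.card (by omega) t h1 h2 h3 rfl
    exact ⟨k + 1, by omega⟩
namespace PapAux

def par (r l : ℕ) (x : ZMod (2*(r+l))) : ZMod 2 :=
  ZMod.castHom (⟨r+l, rfl⟩ : 2 ∣ 2*(r+l)) (ZMod 2) x

lemma par_natCast (r l : ℕ) (a : ℕ) : par r l ((a : ℕ) : ZMod (2*(r+l))) = (a : ZMod 2) := by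
  simp [par]

lemma par_add (r l : ℕ) (x y : ZMod (2*(r+l))) : par r l (x + y) = par r l x + par r l y :=
  map_add _ x y

lemma par_sub (r l : ℕ) (x y : ZMod (2*(r+l))) : par r l (x - y) = par r l x - par r l y :=
  map_sub _ x y

lemma par_one (r l : ℕ) : par r l 1 = 1 := map_one _

lemma par_odd (r l : ℕ) {a : ℕ} (h : a % 2 = 1) : par r l ((a : ℕ) : ZMod (2*(r+l))) = 1 := by
  obtain ⟨k, rfl⟩ : ∃ k, a = 2*k+1 := ⟨a/2, by omega⟩
  rw [par_natCast]
  push_cast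
  have h2 : (2 : ZMod 2) = 0 := by decide
  rw [h2]; ring

lemma par_even (r l : ℕ) {a : ℕ} (h : a % 2 = 0) : par r l ((a : ℕ) : ZMod (2*(r+l))) = 0 := by
  obtain ⟨k, rfl⟩ : ∃ k, a = 2*k := ⟨a/2, by omega⟩
  rw [par_natCast]
  push_cast
  have h2 : (2 : ZMod 2) = 0 := by decide
  rw [h2]; ring

lemma castinj {N : ℕ} [NeZero N] {a b : ℕ} (ha : a < N) (hb : b < N)
    (h : (a : ZMod N) = b) : a = b := by
  have := congrArg ZMod.val h
  rwa [ZMod.val_cast_of_lt ha, ZMod.val_cast_of_lt hb] at this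

lemma castne {N : ℕ} [NeZero N] {a b : ℕ} (ha : a < N) (hb : b < N)
    (h : a ≠ b) : (a : ZMod N) ≠ (b : ZMod N) :=
  fun hc => h (castinj ha hb hc)

def hmf (r l : ℕ) (v : PapVert (2*(r+l))) : PapVert (2*(r+l)) :=
  (v.1, if par r l v.2 = 1 then v.2 + 1 else v.2 - 1)

def spk (r l : ℕ) (v : PapVert (2*(r+l))) : PapVert (2*(r+l)) :=
  (!v.1, v.2)

def outp (r l : ℕ) : PapVert (2*(r+l)) → PapVert (2*(r+l))
  | (false, x) => (false, if par r l x = 1 then x - 1 else x + 1)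
  | (true, x) => (true,
      if par r l x = 1 then
        if x = ((2*min r l - 1 : ℕ) : ZMod (2*(r+l))) then ((2*(r+l) - 1 : ℕ) : ZMod (2*(r+l)))
        else if x = ((2*(r+l) - 1 : ℕ) : ZMod (2*(r+l))) then ((2*min r l - 1 : ℕ) : ZMod (2*(r+l)))
        else x + 3
      else
        if x = ((2 : ℕ) : ZMod (2*(r+l))) then ((2*min r l + 2 : ℕ) : ZMod (2*(r+l)))
        else if x = ((2*min r l + 2 : ℕ) : ZMod (2*(r+l))) then ((2 : ℕ) : ZMod (2*(r+l)))
        else x - 3)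

lemma hmf_fst (r l : ℕ) (v : PapVert (2*(r+l))) : (hmf r l v).1 = v.1 := rfl
lemma spk_fst (r l : ℕ) (v : PapVert (2*(r+l))) : (spk r l v).1 = !v.1 := rfl
lemma outp_fst (r l : ℕ) (v : PapVert (2*(r+l))) : (outp r l v).1 = v.1 := by
  rcases v with ⟨b, x⟩
  cases b <;> simp [outp]

lemma sbound {r l : ℕ} (hr : 1 ≤ r) (hl : 1 ≤ l) :
    1 ≤ min r l ∧ 2 * min r l + 2 ≤ 2*(r+l) ∧ 4 ≤ 2*(r+l) := by
  omega

end PapAux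
namespace PapAux

section Arith
variable {r l : ℕ}

lemma cast_lt_ne {N : ℕ} [NeZero N] {a b : ℕ} (ha : a < N) (hb : b < N) (h : a ≠ b) :
    ((a : ℕ) : ZMod N) ≠ ((b : ℕ) : ZMod N) := castne ha hb h

lemma two_nz (hN : 4 ≤ 2*(r+l)) : (2 : ZMod (2*(r+l))) ≠ 0 := by
  haveI : NeZero (2*(r+l)) := ⟨by omega⟩
  have := cast_lt_ne (N := 2*(r+l)) (a := 2) (b := 0) (by omega) (by omega) (by omega)
  push_cast at this
  exact this

lemma three_nz (hN : 4 ≤ 2*(r+l)) : (3 : ZMod (2*(r+l))) ≠ 0 := by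
  haveI : NeZero (2*(r+l)) := ⟨by omega⟩
  have := cast_lt_ne (N := 2*(r+l)) (a := 3) (b := 0) (by omega) (by omega) (by omega)
  push_cast at this
  exact this

lemma one_nz (hN : 4 ≤ 2*(r+l)) : (1 : ZMod (2*(r+l))) ≠ 0 := by
  haveI : NeZero (2*(r+l)) := ⟨by omega⟩
  have := cast_lt_ne (N := 2*(r+l)) (a := 1) (b := 0) (by omega) (by omega) (by omega)
  push_cast at this
  exact this

lemma zmod2_cases : ∀ y : ZMod 2, y = 0 ∨ y = 1 := by decide

lemma par_not_one {x : ZMod (2*(r+l))} (h : ¬ par r l x = 1) : par r l x = 0 :=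
  (zmod2_cases _).resolve_right h

end Arith

section Invol
variable {r l : ℕ}

lemma hmf_ne (hN : 4 ≤ 2*(r+l)) (v : PapVert (2*(r+l))) : hmf r l v ≠ v := by
  rcases v with ⟨b, x⟩
  simp only [hmf, ne_eq, Prod.mk.injEq, not_and]
  intro _
  split_ifs with h
  · intro hc
    exact one_nz hN (by linear_combination hc)
  · intro hc
    exact one_nz hN (by linear_combination -hc)

lemma spk_ne (v : PapVert (2*(r+l))) : spk r l v ≠ v := by
  rcases v with ⟨b, x⟩
  simp [spk]

lemma hmf_ne_spk (v : PapVert (2*(r+l))) : hmf r l v ≠ spk r l v := by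
  rcases v with ⟨b, x⟩
  simp [hmf, spk]

lemma outp_ne_spk (v : PapVert (2*(r+l))) : outp r l v ≠ spk r l v := by
  have h1 := outp_fst r l v
  intro h
  rw [h] at h1
  simp [spk] at h1

lemma par_add_one (x : ZMod (2*(r+l))) : par r l (x + 1) = par r l x + 1 := by
  rw [par_add, par_one]

lemma par_sub_one (x : ZMod (2*(r+l))) : par r l (x - 1) = par r l x + 1 := by
  rw [par_sub, par_one]
  have h5 : ∀ y : ZMod 2, y - 1 = y + 1 := by decide
  exact h5 _

lemma hmf_invol (hN : 4 ≤ 2*(r+l)) (v : PapVert (2*(r+l))) : hmf r l (hmf r l v) = v := by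
  rcases v with ⟨b, x⟩
  simp only [hmf]
  split_ifs with h1 h2 h2
  · rw [par_add_one, h1] at h2
    exact absurd h2 (by decide)
  · simp only [Prod.mk.injEq, true_and]; ring
  · simp only [Prod.mk.injEq, true_and]; ring
  · exfalso
    apply h2
    rw [par_sub_one, par_not_one h1]
    decide

end Invol
end PapAux
namespace PapAux

section OutpFacts
variable {r l : ℕ}

-- abbreviations via casts
lemma cast3 : ((3:ℕ) : ZMod (2*(r+l))) = 3 := by push_cast; ring
lemma cast2 : ((2:ℕ) : ZMod (2*(r+l))) = 2 := by push_cast; ring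

lemma par_c1 (hr : 1 ≤ r) (hl : 1 ≤ l) :
    par r l ((2*min r l - 1 : ℕ) : ZMod (2*(r+l))) = 1 := par_odd r l (by omega)

lemma par_cN (hr : 1 ≤ r) (hl : 1 ≤ l) :
    par r l ((2*(r+l) - 1 : ℕ) : ZMod (2*(r+l))) = 1 := par_odd r l (by omega)

lemma par_cS : par r l ((2*min r l + 2 : ℕ) : ZMod (2*(r+l))) = 0 := par_even r l (by omega)

lemma par_c2 : par r l ((2 : ℕ) : ZMod (2*(r+l))) = 0 := par_even r l (by omega)

lemma par_three : par r l (3 : ZMod (2*(r+l))) = 1 := by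
  rw [← cast3]; exact par_odd r l (by omega)

lemma par_add_three (x : ZMod (2*(r+l))) : par r l (x + 3) = par r l x + 1 := by
  rw [par_add, par_three]

lemma par_sub_three (x : ZMod (2*(r+l))) : par r l (x - 3) = par r l x + 1 := by
  rw [par_sub, par_three]
  have h5 : ∀ y : ZMod 2, y - 1 = y + 1 := by decide
  exact h5 _

-- c1 = 2s-1, cN = N-1, cS = 2s+2, c2 = 2
lemma hcN (hr : 1 ≤ r) (hl : 1 ≤ l) : ((2*(r+l) - 1 : ℕ) : ZMod (2*(r+l))) = -1 := by
  rw [Nat.cast_sub (by omega : (1:ℕ) ≤ 2*(r+l))]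
  simp

lemma hc1 (hr : 1 ≤ r) (hl : 1 ≤ l) :
    ((2*min r l - 1 : ℕ) : ZMod (2*(r+l))) = ((2*min r l : ℕ) : ZMod (2*(r+l))) - 1 := by
  rw [Nat.cast_sub (by omega : (1:ℕ) ≤ 2*min r l)]
  simp

lemma hc1S (hr : 1 ≤ r) (hl : 1 ≤ l) :
    ((2*min r l - 1 : ℕ) : ZMod (2*(r+l))) + 3 = ((2*min r l + 2 : ℕ) : ZMod (2*(r+l))) := by
  rw [hc1 hr hl]
  push_cast
  ring

lemma cS_ne_small (hr : 1 ≤ r) (hl : 1 ≤ l) {a : ℕ} (ha : a < 2*(r+l))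
    (h1 : a ≠ 2*min r l + 2) (h0 : a ≠ 0) :
    ((2*min r l + 2 : ℕ) : ZMod (2*(r+l))) ≠ ((a : ℕ) : ZMod (2*(r+l))) := by
  haveI : NeZero (2*(r+l)) := ⟨by omega⟩
  by_cases hsN : 2*min r l + 2 = 2*(r+l)
  · rw [hsN, ZMod.natCast_self]
    have := cast_lt_ne (N := 2*(r+l)) (a := 0) (b := a) (by omega) ha (by omega)
    simpa using this
  · exact cast_lt_ne (by omega) ha (by omega)

lemma c1_ne_cN (hr : 1 ≤ r) (hl : 1 ≤ l) :
    ((2*min r l - 1 : ℕ) : ZMod (2*(r+l))) ≠ ((2*(r+l) - 1 : ℕ) : ZMod (2*(r+l))) := by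
  haveI : NeZero (2*(r+l)) := ⟨by omega⟩
  exact cast_lt_ne (by omega) (by omega) (by omega)

end OutpFacts
end PapAux
namespace PapAux
section OutpMain
variable {r l : ℕ}

lemma outp_invol (hr : 1 ≤ r) (hl : 1 ≤ l) (v : PapVert (2*(r+l))) :
    outp r l (outp r l v) = v := by
  haveI : NeZero (2*(r+l)) := ⟨by omega⟩
  have hN : 4 ≤ 2*(r+l) := by omega
  rcases v with ⟨b, x⟩
  cases b
  · -- outer
    simp only [outp]
    split_ifs with h1 h2 h2
    · rw [par_sub_one, h1] at h2
      exact absurd h2 (by decide)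
    · simp only [Prod.mk.injEq, true_and]; ring
    · simp only [Prod.mk.injEq, true_and]; ring
    · exfalso; apply h2; rw [par_add_one, par_not_one h1]; decide
  · -- inner
    simp only [outp]
    by_cases h1 : par r l x = 1
    · rw [if_pos h1]
      by_cases hA : x = ((2*min r l - 1 : ℕ) : ZMod (2*(r+l)))
      · rw [if_pos hA, if_pos (par_cN hr hl),
          if_neg (Ne.symm (c1_ne_cN hr hl)), if_pos rfl, hA]
      · rw [if_neg hA]
        by_cases hB : x = ((2*(r+l) - 1 : ℕ) : ZMod (2*(r+l)))
        · rw [if_pos hB, if_pos (par_c1 hr hl), if_pos rfl, hB]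
        · rw [if_neg hB]
          have hpar : par r l (x + 3) = 0 := by rw [par_add_three, h1]; decide
          rw [if_neg (by rw [hpar]; decide)]
          have hne2 : x + 3 ≠ ((2 : ℕ) : ZMod (2*(r+l))) := by
            intro h
            apply hB
            rw [hcN hr hl]
            rw [cast2] at h
            linear_combination h
          rw [if_neg hne2]
          have hneS : x + 3 ≠ ((2*min r l + 2 : ℕ) : ZMod (2*(r+l))) := by
            intro h
            apply hA
            rw [← hc1S hr hl] at h
            linear_combination h
          rw [if_neg hneS]
          simp only [Prod.mk.injEq, true_and]; ring
    · rw [if_neg h1]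
      have h0 := par_not_one h1
      by_cases hA : x = ((2 : ℕ) : ZMod (2*(r+l)))
      · rw [if_pos hA, if_neg (by rw [par_cS]; decide),
          if_neg (cS_ne_small hr hl (by omega) (by omega) (by omega)), if_pos rfl, hA]
      · rw [if_neg hA]
        by_cases hB : x = ((2*min r l + 2 : ℕ) : ZMod (2*(r+l)))
        · rw [if_pos hB, if_neg (by rw [par_c2]; decide), if_pos rfl, hB]
        · rw [if_neg hB]
          have hpar : par r l (x - 3) = 1 := by rw [par_sub_three, h0]; decide
          rw [if_pos hpar]
          have hne1 : x - 3 ≠ ((2*min r l - 1 : ℕ) : ZMod (2*(r+l))) := by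
            intro h
            apply hB
            rw [← hc1S hr hl, ← h]
            ring
          rw [if_neg hne1]
          have hneN : x - 3 ≠ ((2*(r+l) - 1 : ℕ) : ZMod (2*(r+l))) := by
            intro h
            apply hA
            rw [hcN hr hl] at h
            rw [cast2]
            linear_combination h
          rw [if_neg hneN]
          simp only [Prod.mk.injEq, true_and]; ring

end OutpMain
end PapAux
namespace PapAux
section OutpNe
variable {r l : ℕ}

lemma outp_ne (hr : 1 ≤ r) (hl : 1 ≤ l) (v : PapVert (2*(r+l))) :
    outp r l v ≠ v := by
  haveI : NeZero (2*(r+l)) := ⟨by omega⟩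
  have hN : 4 ≤ 2*(r+l) := by omega
  rcases v with ⟨b, x⟩
  cases b
  · simp only [outp, ne_eq, Prod.mk.injEq, true_and]
    split_ifs with h1
    · intro hc; exact one_nz hN (by linear_combination -hc)
    · intro hc; exact one_nz hN (by linear_combination hc)
  · simp only [outp, ne_eq, Prod.mk.injEq, true_and]
    split_ifs with h1 hA hB hA hB
    · rw [hA]; exact Ne.symm (c1_ne_cN hr hl)
    · rw [hB]; exact c1_ne_cN hr hl
    · intro hc; exact three_nz hN (by linear_combination hc)
    · rw [hA]
      exact cS_ne_small hr hl (by omega) (by omega) (by omega)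
    · rw [hB]
      exact Ne.symm (cS_ne_small hr hl (by omega) (by omega) (by omega))
    · intro hc; exact three_nz hN (by linear_combination -hc)

lemma outp_ne_hmf (hr : 1 ≤ r) (hl : 1 ≤ l) (v : PapVert (2*(r+l))) :
    outp r l v ≠ hmf r l v := by
  haveI : NeZero (2*(r+l)) := ⟨by omega⟩
  have hN : 4 ≤ 2*(r+l) := by omega
  rcases v with ⟨b, x⟩
  cases b
  · simp only [outp, hmf, ne_eq, Prod.mk.injEq, true_and]
    split_ifs with h1
    · intro hc; exact two_nz hN (by linear_combination -hc)
    · intro hc; exact two_nz hN (by linear_combination hc)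
  · simp only [outp, hmf, ne_eq, Prod.mk.injEq, true_and]
    split_ifs with h1 hA hB hA hB
    · -- x = c1 : cN vs c1 + 1
      rw [hA, hcN hr hl, hc1 hr hl]
      intro hc
      have h2s : ((2*min r l + 1 : ℕ) : ZMod (2*(r+l))) = ((0:ℕ) : ZMod (2*(r+l))) := by
        push_cast at hc ⊢
        linear_combination -hc
      exact (cast_lt_ne (N := 2*(r+l)) (a := 2*min r l + 1) (b := 0)
        (by omega) (by omega) (by omega)) h2s
    · -- x = cN : c1 vs cN + 1 = 0
      rw [hB, hcN hr hl, hc1 hr hl]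
      intro hc
      have h2s : ((2*min r l : ℕ) : ZMod (2*(r+l))) = ((1:ℕ) : ZMod (2*(r+l))) := by
        push_cast
        push_cast at hc
        linear_combination hc
      exact (cast_lt_ne (N := 2*(r+l)) (a := 2*min r l) (b := 1)
        (by omega) (by omega) (by omega)) h2s
    · intro hc; exact two_nz hN (by linear_combination hc)
    · -- x = 2 : cS vs 2 - 1 = 1
      rw [hA, cast2]
      intro hc
      have h2s : ((2*min r l + 2 : ℕ) : ZMod (2*(r+l))) = ((1:ℕ) : ZMod (2*(r+l))) := by
        push_cast
        push_cast at hc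
        linear_combination hc
      exact cS_ne_small hr hl (by omega) (by omega) (by omega) h2s
    · -- x = cS : 2 vs cS - 1 = 2s+1
      rw [hB, cast2]
      intro hc
      have h2s : ((2*min r l + 1 : ℕ) : ZMod (2*(r+l))) = ((2:ℕ) : ZMod (2*(r+l))) := by
        push_cast
        push_cast at hc
        linear_combination -hc
      exact (cast_lt_ne (N := 2*(r+l)) (a := 2*min r l + 1) (b := 2)
        (by omega) (by omega) (by omega)) h2s
    · intro hc; exact two_nz hN (by linear_combination -hc)

end OutpNe
end PapAux
namespace PapAux
section Classify
variable {r l : ℕ}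

lemma pu_eq (i : ℕ) : pu (2*(r+l)) i = ((false, (i : ZMod (2*(r+l)))) : PapVert (2*(r+l))) := rfl
lemma pv_eq (i : ℕ) : pv (2*(r+l)) i = ((true, (i : ZMod (2*(r+l)))) : PapVert (2*(r+l))) := rfl

lemma npar {a : ℕ} (h : a % 2 = 0) : ¬ (par r l ((a : ℕ) : ZMod (2*(r+l))) = 1) := by
  rw [par_even r l h]; decide

lemma cast_2ip2_ne_2 (hr : 1 ≤ r) (hl : 1 ≤ l) {i : ℕ} (hi1 : 1 ≤ i) (hi2 : i ≤ r + l - 1) :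
    ((2*i+2 : ℕ) : ZMod (2*(r+l))) ≠ ((2 : ℕ) : ZMod (2*(r+l))) := by
  haveI : NeZero (2*(r+l)) := ⟨by omega⟩
  by_cases hiN : 2*i+2 = 2*(r+l)
  · rw [hiN, ZMod.natCast_self]
    have := cast_lt_ne (N := 2*(r+l)) (a := 0) (b := 2) (by omega) (by omega) (by omega)
    simpa using this
  · exact cast_lt_ne (by omega) (by omega) (by omega)

lemma cast_2ip2_ne_cS (hr : 1 ≤ r) (hl : 1 ≤ l) {i : ℕ} (hi1 : 1 ≤ i) (hi2 : i ≤ r + l - 1)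
    (his : i ≠ min r l) :
    ((2*i+2 : ℕ) : ZMod (2*(r+l))) ≠ ((2*min r l + 2 : ℕ) : ZMod (2*(r+l))) := by
  haveI : NeZero (2*(r+l)) := ⟨by omega⟩
  by_cases hiN : 2*i+2 = 2*(r+l)
  · rw [hiN, ZMod.natCast_self]
    intro h
    have := cast_lt_ne (N := 2*(r+l)) (a := 2*min r l + 2) (b := 0)
      (by omega) (by omega) (by omega)
    exact this (by simpa using h.symm)
  · by_cases hsN : 2*min r l + 2 = 2*(r+l)
    · rw [hsN, ZMod.natCast_self]
      have := cast_lt_ne (N := 2*(r+l)) (a := 2*i+2) (b := 0) (by omega) (by omega) (by omega)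
      simpa using this
    · exact cast_lt_ne (by omega) (by omega) (by omega)

lemma edge_classify (hr : 1 ≤ r) (hl : 1 ≤ l) {e : Sym2 (PapVert (2*(r+l)))}
    (he : e ∈ papillonEdges r l) {v : PapVert (2*(r+l))} (hv : v ∈ e) :
    e = s(v, hmf r l v) ∨ e = s(v, spk r l v) ∨ e = s(v, outp r l v) := by
  haveI : NeZero (2*(r+l)) := ⟨by omega⟩
  have hN4 : 4 ≤ 2*(r+l) := by omega
  have swap : ∀ a b : PapVert (2*(r+l)), s(a,b) = s(b,a) := fun a b => Sym2.eq_swap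
  rcases he with ⟨i, hi1, hi2, rfl⟩ | rfl | ⟨i, hi1, hi2, rfl⟩ | ⟨i, hi1, hi2, rfl⟩ |
    ⟨i, hi1, hi2, his, rfl⟩ | rfl | rfl
  · -- outer edges u_i u_{i+1}
    rw [pu_eq, pu_eq] at hv ⊢
    rcases Nat.even_or_odd i with ⟨k, rfl⟩ | ⟨k, rfl⟩
    · -- i even : out-edge
      right; right
      rcases Sym2.mem_iff.mp hv with rfl | rfl
      · have : outp r l (false, ((k+k : ℕ) : ZMod (2*(r+l)))) =
            (false, ((k+k+1 : ℕ) : ZMod (2*(r+l)))) := by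
          simp only [outp]
          rw [if_neg (npar (by omega))]
          simp only [Prod.mk.injEq, true_and]
          push_cast; ring
        rw [this]
      · rw [swap]
        have : outp r l (false, ((k+k+1 : ℕ) : ZMod (2*(r+l)))) =
            (false, ((k+k : ℕ) : ZMod (2*(r+l)))) := by
          simp only [outp]
          rw [if_pos (par_odd r l (by omega))]
          simp only [Prod.mk.injEq, true_and]
          push_cast; ring
        rw [this]
    · -- i odd : square edge
      left
      rcases Sym2.mem_iff.mp hv with rfl | rfl
      · have : hmf r l (false, ((2*k+1 : ℕ) : ZMod (2*(r+l)))) =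
            (false, ((2*k+1+1 : ℕ) : ZMod (2*(r+l)))) := by
          simp only [hmf]
          rw [if_pos (par_odd r l (by omega))]
          simp only [Prod.mk.injEq, true_and]
          push_cast; ring
        rw [this]
      · rw [swap]
        have : hmf r l (false, ((2*k+1+1 : ℕ) : ZMod (2*(r+l)))) =
            (false, ((2*k+1 : ℕ) : ZMod (2*(r+l)))) := by
          simp only [hmf]
          rw [if_neg (npar (by omega))]
          simp only [Prod.mk.injEq, true_and]
          push_cast; ring
        rw [this]
  · -- edge u_N u_1
    right; right
    rw [pu_eq, pu_eq] at hv ⊢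
    rcases Sym2.mem_iff.mp hv with rfl | rfl
    · have : outp r l (false, ((2*(r+l) : ℕ) : ZMod (2*(r+l)))) =
          (false, ((1 : ℕ) : ZMod (2*(r+l)))) := by
        simp only [outp]
        rw [if_neg (npar (by omega))]
        simp only [Prod.mk.injEq, true_and]
        rw [ZMod.natCast_self]
        push_cast; ring
      rw [this]
    · rw [swap]
      have : outp r l (false, ((1 : ℕ) : ZMod (2*(r+l)))) =
          (false, ((2*(r+l) : ℕ) : ZMod (2*(r+l)))) := by
        simp only [outp]
        rw [if_pos (par_odd r l (by omega))]
        simp only [Prod.mk.injEq, true_and]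
        rw [ZMod.natCast_self]
        push_cast; ring
      rw [this]
  · -- spokes
    right; left
    rw [pu_eq, pv_eq] at hv ⊢
    rcases Sym2.mem_iff.mp hv with rfl | rfl
    · rfl
    · rw [swap]; rfl
  · -- short inner edges v_{2i-1} v_{2i}
    left
    obtain ⟨i', rfl⟩ : ∃ i', i = i'+1 := ⟨i-1, by omega⟩
    have h21 : 2*(i'+1) - 1 = 2*i'+1 := by omega
    rw [pv_eq, pv_eq, h21] at hv ⊢
    rcases Sym2.mem_iff.mp hv with rfl | rfl
    · have : hmf r l (true, ((2*i'+1 : ℕ) : ZMod (2*(r+l)))) =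
          (true, ((2*(i'+1) : ℕ) : ZMod (2*(r+l)))) := by
        simp only [hmf]
        rw [if_pos (par_odd r l (by omega))]
        simp only [Prod.mk.injEq, true_and]
        push_cast; ring
      rw [this]
    · rw [swap]
      have : hmf r l (true, ((2*(i'+1) : ℕ) : ZMod (2*(r+l)))) =
          (true, ((2*i'+1 : ℕ) : ZMod (2*(r+l)))) := by
        simp only [hmf]
        rw [if_neg (npar (by omega))]
        simp only [Prod.mk.injEq, true_and]
        push_cast; ring
      rw [this]
  · -- chords v_{2i-1} v_{2i+2}
    right; right
    have h21 : 2*i - 1 = 2*(i-1)+1 := by omega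
    rw [pv_eq, pv_eq, h21] at hv ⊢
    rcases Sym2.mem_iff.mp hv with rfl | rfl
    · have : outp r l (true, ((2*(i-1)+1 : ℕ) : ZMod (2*(r+l)))) =
          (true, ((2*i+2 : ℕ) : ZMod (2*(r+l)))) := by
        simp only [outp]
        rw [if_pos (par_odd r l (by omega)),
          if_neg (by
            have hmm : 2*min r l - 1 = 2*(min r l - 1)+1 := by omega
            rw [hmm]
            exact cast_lt_ne (by omega) (by omega) (by omega)),
          if_neg (by
            have hmm : 2*(r+l) - 1 = 2*((r+l)-1)+1 := by omega
            rw [hmm]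
            exact cast_lt_ne (by omega) (by omega) (by omega))]
        simp only [Prod.mk.injEq, true_and]
        have hi' : ((i:ℕ) : ZMod (2*(r+l))) = ((i-1 : ℕ) : ZMod (2*(r+l))) + 1 := by
          rw [Nat.cast_sub (by omega : (1:ℕ) ≤ i)]
          push_cast; ring
        push_cast [hi']
        ring
      rw [this]
    · rw [swap]
      have : outp r l (true, ((2*i+2 : ℕ) : ZMod (2*(r+l)))) =
          (true, ((2*(i-1)+1 : ℕ) : ZMod (2*(r+l)))) := by
        simp only [outp]
        rw [if_neg (npar (by omega)),
          if_neg (cast_2ip2_ne_2 hr hl hi1 hi2),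
          if_neg (cast_2ip2_ne_cS hr hl hi1 hi2 his)]
        simp only [Prod.mk.injEq, true_and]
        have hi' : ((i:ℕ) : ZMod (2*(r+l))) = ((i-1 : ℕ) : ZMod (2*(r+l))) + 1 := by
          rw [Nat.cast_sub (by omega : (1:ℕ) ≤ i)]
          push_cast; ring
        push_cast [hi']
        ring
      rw [this]
  · -- e1
    right; right
    rw [pv_eq, pv_eq] at hv ⊢
    rcases Sym2.mem_iff.mp hv with rfl | rfl
    · have : outp r l (true, ((2 : ℕ) : ZMod (2*(r+l)))) =
          (true, ((2*min r l + 2 : ℕ) : ZMod (2*(r+l)))) := by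
        simp only [outp]
        rw [if_neg (npar (by omega))]
        simp
      rw [this]
    · rw [swap]
      have : outp r l (true, ((2*min r l + 2 : ℕ) : ZMod (2*(r+l)))) =
          (true, ((2 : ℕ) : ZMod (2*(r+l)))) := by
        simp only [outp]
        rw [if_neg (npar (by omega)),
          if_neg (cS_ne_small hr hl (by omega) (by omega) (by omega))]
        simp
      rw [this]
  · -- e2
    right; right
    rw [pv_eq, pv_eq] at hv ⊢
    rcases Sym2.mem_iff.mp hv with rfl | rfl
    · have : outp r l (true, ((2*min r l - 1 : ℕ) : ZMod (2*(r+l)))) =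
          (true, ((2*(r+l) - 1 : ℕ) : ZMod (2*(r+l)))) := by
        simp only [outp]
        rw [if_pos (par_c1 hr hl)]
        simp
      rw [this]
    · rw [swap]
      have : outp r l (true, ((2*(r+l) - 1 : ℕ) : ZMod (2*(r+l)))) =
          (true, ((2*min r l - 1 : ℕ) : ZMod (2*(r+l)))) := by
        simp only [outp]
        rw [if_pos (par_cN hr hl), if_neg (Ne.symm (c1_ne_cN hr hl))]
        simp
      rw [this]

end Classify
end PapAux
namespace PapAux
section Corners
variable {r l : ℕ}

lemma hmf_left {j : ZMod (2*(r+l))} (hj : par r l j = 1) (b : Bool) :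
    hmf r l (b, j) = (b, j+1) := by
  show (b, if par r l j = 1 then j + 1 else j - 1) = (b, j+1)
  rw [if_pos hj]

lemma hmf_right {j : ZMod (2*(r+l))} (hj : par r l j = 1) (b : Bool) :
    hmf r l (b, j+1) = (b, j) := by
  show (b, if par r l (j+1) = 1 then (j+1) + 1 else (j+1) - 1) = (b, j)
  rw [if_neg (by rw [par_add_one, hj]; decide)]
  simp only [Prod.mk.injEq, true_and]
  ring

lemma spk_pair (b : Bool) (x : ZMod (2*(r+l))) : spk r l (b, x) = (!b, x) := rfl

def sqi (r l : ℕ) (v : PapVert (2*(r+l))) : ZMod (2*(r+l)) :=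
  if par r l v.2 = 1 then v.2 else v.2 - 1

lemma par_sqi (v : PapVert (2*(r+l))) : par r l (sqi r l v) = 1 := by
  rcases v with ⟨b, x⟩
  show par r l (if par r l x = 1 then x else x - 1) = 1
  split_ifs with h
  · exact h
  · rw [par_sub_one, par_not_one h]
    decide

lemma sqi_vals {j : ZMod (2*(r+l))} {b : Bool} {x : ZMod (2*(r+l))}
    (h : sqi r l (b, x) = j) : x = j ∨ x = j + 1 := by
  have hx : sqi r l (b, x) = (if par r l x = 1 then x else x - 1) := rfl
  rw [hx] at h
  split_ifs at h with hp
  · exact Or.inl h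
  · right
    rw [← h]
    ring

lemma sqi_left {j : ZMod (2*(r+l))} (hj : par r l j = 1) (b : Bool) : sqi r l (b, j) = j := by
  show (if par r l j = 1 then j else j - 1) = j
  rw [if_pos hj]

lemma sqi_right {j : ZMod (2*(r+l))} (hj : par r l j = 1) (b : Bool) :
    sqi r l (b, j+1) = j := by
  show (if par r l (j+1) = 1 then j+1 else (j+1) - 1) = j
  rw [if_neg (by rw [par_add_one, hj]; decide)]
  ring

lemma zmod_ne_succ (hN4 : 4 ≤ 2*(r+l)) (j : ZMod (2*(r+l))) : j ≠ j + 1 := by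
  intro h
  exact one_nz hN4 (by linear_combination -h)

end Corners
end PapAux

end PapAuxSection

open PapAux

/-- Every papillon graph `P_{r,ℓ}` is even-2-factorable: every 2-factor of `P_{r,ℓ}`
contains only cycles of even length. -/
theorem statement8 (r l : ℕ) (hr : 1 ≤ r) (hl : 1 ≤ l) : IsE2F (papillon r l) := by
  intro F hF x c hc hcF
  classical
  haveI : NeZero (2*(r+l)) := ⟨by omega⟩
  -- edges of c are papillon edges
  have hedges : ∀ e ∈ c.edges, e ∈ papillonEdges r l := by
    intro e he
    have h1 := c.edges_subset_edgeSet he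
    rw [papillon, SimpleGraph.edgeSet_fromEdgeSet] at h1
    exact h1.1
  have hnotnil : ¬ c.Nil := by
    intro h
    have := hc.three_le_length
    rw [SimpleGraph.Walk.nil_iff_length_eq.mp h] at this
    omega
  have hsupp_tail : ∀ v, v ∈ c.support ↔ v ∈ c.support.tail := by
    intro v
    constructor
    · intro hv
      rw [c.support_eq_cons] at hv
      rcases List.mem_cons.mp hv with rfl | h
      · exact end_mem_support_tail c hnotnil
      · exact h
    · exact fun h => List.mem_of_mem_tail h
  set VC : Finset (PapVert (2*(r+l))) := c.support.tail.toFinset with hVC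
  have hVCmem : ∀ v, v ∈ VC ↔ v ∈ c.support := by
    intro v
    rw [hVC, List.mem_toFinset]
    exact (hsupp_tail v).symm
  have hVCcard : VC.card = c.length := by
    rw [hVC, List.toFinset_card_of_nodup hc.support_nodup]
    rw [List.length_tail, SimpleGraph.Walk.length_support]
    omega
  -- edge distinctness at a vertex
  have e_dist : ∀ v : PapVert (2*(r+l)),
      s(v, hmf r l v) ≠ s(v, spk r l v) ∧ s(v, hmf r l v) ≠ s(v, outp r l v) ∧
      s(v, spk r l v) ≠ s(v, outp r l v) := by
    intro v
    refine ⟨?_, ?_, ?_⟩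
    · intro h; exact hmf_ne_spk v (Sym2.congr_right.mp h)
    · intro h; exact (outp_ne_hmf hr hl v) (Sym2.congr_right.mp h).symm
    · intro h; exact (outp_ne_spk v) (Sym2.congr_right.mp h).symm
  -- two distinct cycle edges at every support vertex, in classified form
  have key1 : ∀ v ∈ c.support, ∀ e, e ∈ F → v ∈ e → e ∈ c.edges := by
    intro v hv e heF hev
    obtain ⟨d₁, d₂, hd12, hd1c, hd2c, hv1, hv2⟩ := cycle_two_edges hc hv
    obtain ⟨f₁, f₂, hf12, hf1, hf2, hvf1, hvf2, hmax⟩ := hF.2 v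
    have hd1 := hmax d₁ (hcF _ hd1c) hv1
    have hd2 := hmax d₂ (hcF _ hd2c) hv2
    have hff : (f₁ ∈ c.edges) ∧ (f₂ ∈ c.edges) := by
      rcases hd1 with h1 | h1 <;> rcases hd2 with h2 | h2
      · exact absurd (h1.trans h2.symm) hd12
      · exact ⟨h1 ▸ hd1c, h2 ▸ hd2c⟩
      · exact ⟨h2 ▸ hd2c, h1 ▸ hd1c⟩
      · exact absurd (h1.trans h2.symm) hd12
    rcases hmax e heF hev with rfl | rfl
    · exact hff.1
    · exact hff.2
  have keyD1 : ∀ v ∈ c.support, s(v, outp r l v) ∉ c.edges →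
      s(v, hmf r l v) ∈ c.edges ∧ s(v, spk r l v) ∈ c.edges := by
    intro v hv hout
    obtain ⟨d₁, d₂, hd12, hd1c, hd2c, hv1, hv2⟩ := cycle_two_edges hc hv
    have hcl1 := edge_classify hr hl (hedges _ hd1c) hv1
    have hcl2 := edge_classify hr hl (hedges _ hd2c) hv2
    have h1 : d₁ = s(v, hmf r l v) ∨ d₁ = s(v, spk r l v) := by
      rcases hcl1 with h | h | h
      · exact Or.inl h
      · exact Or.inr h
      · exact absurd (h ▸ hd1c) hout
    have h2 : d₂ = s(v, hmf r l v) ∨ d₂ = s(v, spk r l v) := by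
      rcases hcl2 with h | h | h
      · exact Or.inl h
      · exact Or.inr h
      · exact absurd (h ▸ hd2c) hout
    rcases h1 with h1 | h1 <;> rcases h2 with h2 | h2
    · exact absurd (h1.trans h2.symm) hd12
    · exact ⟨h1 ▸ hd1c, h2 ▸ hd2c⟩
    · exact ⟨h2 ▸ hd2c, h1 ▸ hd1c⟩
    · exact absurd (h1.trans h2.symm) hd12
  have keyD2 : ∀ v ∈ c.support, s(v, outp r l v) ∈ c.edges →
      ¬ (s(v, hmf r l v) ∈ c.edges ∧ s(v, spk r l v) ∈ c.edges) := by
    rintro v hv hout ⟨hh, hs⟩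
    obtain ⟨f₁, f₂, hf12, hf1, hf2, hvf1, hvf2, hmax⟩ := hF.2 v
    have c1 := hmax _ (hcF _ hh) (Sym2.mem_mk_left _ _)
    have c2 := hmax _ (hcF _ hs) (Sym2.mem_mk_left _ _)
    have c3 := hmax _ (hcF _ hout) (Sym2.mem_mk_left _ _)
    obtain ⟨q1, q2, q3⟩ := e_dist v
    rcases c1 with h1 | h1 <;> rcases c2 with h2 | h2 <;> rcases c3 with h3 | h3 <;>
      first
        | exact q1 (h1.trans h2.symm)
        | exact q2 (h1.trans h3.symm)
        | exact q3 (h2.trans h3.symm)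
  -- corner-kill
  have hK : ∀ z : PapVert (2*(r+l)), s(z, hmf r l z) ∉ F → s(z, spk r l z) ∉ F → False := by
    intro z hkh hks
    obtain ⟨f₁, f₂, hf12, hf1, hf2, hvf1, hvf2, hmax⟩ := hF.2 z
    have hcl1 := edge_classify hr hl (Set.mem_of_mem_of_subset hf1 (by
      intro e he
      have := hF.1 he
      rw [papillon, SimpleGraph.edgeSet_fromEdgeSet] at this
      exact this.1)) hvf1
    have hcl2 := edge_classify hr hl (Set.mem_of_mem_of_subset hf2 (by
      intro e he
      have := hF.1 he
      rw [papillon, SimpleGraph.edgeSet_fromEdgeSet] at this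
      exact this.1)) hvf2
    have h1 : f₁ = s(z, outp r l z) := by
      rcases hcl1 with h | h | h
      · exact absurd (h ▸ hf1) hkh
      · exact absurd (h ▸ hf1) hks
      · exact h
    have h2 : f₂ = s(z, outp r l z) := by
      rcases hcl2 with h | h | h
      · exact absurd (h ▸ hf2) hkh
      · exact absurd (h ▸ hf2) hks
      · exact h
    exact hf12 (h1.trans h2.symm)
  -- split the vertices of the cycle
  set S1 : Finset (PapVert (2*(r+l))) :=
    VC.filter (fun v => s(v, outp r l v) ∈ c.edges) with hS1
  set S2 : Finset (PapVert (2*(r+l))) :=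
    VC.filter (fun v => ¬ (s(v, outp r l v) ∈ c.edges)) with hS2
  have hsplit : S1.card + S2.card = VC.card := by
    rw [hS1, hS2]
    exact Finset.card_filter_add_card_filter_not
      (fun v => s(v, outp r l v) ∈ c.edges)
  have hevenS1 : Even S1.card := by
    apply even_card_of_involution S1 (outp r l)
    · intro v hv
      rw [hS1, Finset.mem_filter] at hv ⊢
      obtain ⟨hvVC, hvout⟩ := hv
      refine ⟨?_, ?_⟩
      · rw [hVCmem]
        exact SimpleGraph.Walk.snd_mem_support_of_mem_edges c hvout
      · rw [outp_invol hr hl v, Sym2.eq_swap]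
        exact hvout
    · intro v _
      exact outp_invol hr hl v
    · intro v _
      exact outp_ne hr hl v
  have hS2iff : ∀ v, v ∈ S2 ↔
      (v ∈ c.support ∧ s(v, hmf r l v) ∈ c.edges ∧ s(v, spk r l v) ∈ c.edges) := by
    intro v
    rw [hS2, Finset.mem_filter, hVCmem]
    constructor
    · rintro ⟨hv, hout⟩
      exact ⟨hv, keyD1 v hv hout⟩
    · rintro ⟨hv, hboth⟩
      exact ⟨hv, fun hout => keyD2 v hv hout hboth⟩
  -- helper: edges of F at support vertices are cycle edges (contrapositive form)
  have hnotF : ∀ v w : PapVert (2*(r+l)), v ∈ c.support → s(v, w) ∉ c.edges →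
      s(v, w) ∉ F := by
    intro v w hv hne hmemF
    exact hne (key1 v hv _ hmemF (Sym2.mem_mk_left _ _))
  have hedge_sup : ∀ v w : PapVert (2*(r+l)), s(v, w) ∈ c.edges → w ∈ c.support :=
    fun v w h => SimpleGraph.Walk.snd_mem_support_of_mem_edges c h
  have hsingle : ∀ v w1 w2 z : PapVert (2*(r+l)),
      hmf r l v = w1 → spk r l v = w2 →
      hmf r l w1 = v → spk r l w1 = z →
      hmf r l w2 = z → spk r l w2 = v →
      hmf r l z = w2 → spk r l z = w1 →
      v ∈ S2 → w1 ∉ S2 → w2 ∉ S2 → False := by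
    intro v w1 w2 z e1 e2 e3 e4 e5 e6 e7 e8 hv hw1 hw2
    obtain ⟨hvsup, hvh, hvs⟩ := (hS2iff v).mp hv
    rw [e1] at hvh
    rw [e2] at hvs
    have hw1sup : w1 ∈ c.support := hedge_sup _ _ hvh
    have hw2sup : w2 ∈ c.support := hedge_sup _ _ hvs
    have hw1z : s(w1, z) ∉ c.edges := by
      intro hmem
      refine hw1 ((hS2iff w1).mpr ⟨hw1sup, ?_, ?_⟩)
      · rw [e3, Sym2.eq_swap]; exact hvh
      · rw [e4]; exact hmem
    have hw2z : s(w2, z) ∉ c.edges := by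
      intro hmem
      refine hw2 ((hS2iff w2).mpr ⟨hw2sup, ?_, ?_⟩)
      · rw [e5]; exact hmem
      · rw [e6, Sym2.eq_swap]; exact hvs
    apply hK z
    · rw [e7, Sym2.eq_swap]
      exact hnotF w2 z hw2sup hw2z
    · rw [e8, Sym2.eq_swap]
      exact hnotF w1 z hw1sup hw1z
  have htriple : ∀ w1 w2 z : PapVert (2*(r+l)),
      spk r l w1 = z → hmf r l w2 = z →
      hmf r l z = w2 → spk r l z = w1 →
      w1 ∈ S2 → w2 ∈ S2 → z ∉ S2 → False := by
    intro w1 w2 z e4 e5 e7 e8 hw1 hw2 hz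
    obtain ⟨hw1sup, hw1h, hw1s⟩ := (hS2iff w1).mp hw1
    obtain ⟨hw2sup, hw2h, hw2s⟩ := (hS2iff w2).mp hw2
    rw [e4] at hw1s
    rw [e5] at hw2h
    have hzsup : z ∈ c.support := hedge_sup _ _ hw1s
    refine hz ((hS2iff z).mpr ⟨hzsup, ?_, ?_⟩)
    · rw [e7, Sym2.eq_swap]; exact hw2h
    · rw [e8, Sym2.eq_swap]; exact hw1s
  have fiber_even : ∀ j : ZMod (2*(r+l)),
      Even ((S2.filter (fun v => sqi r l v = j)).card) := by
    intro j
    by_cases hj : par r l j = 1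
    · -- the interesting case : the four corners of square j
      have hN4 : 4 ≤ 2*(r+l) := by omega
      have hjne := zmod_ne_succ hN4 j
      have hmA : hmf r l ((false, j) : PapVert (2*(r+l))) = (false, j+1) := hmf_left hj false
      have hmB : hmf r l ((false, j+1) : PapVert (2*(r+l))) = (false, j) := hmf_right hj false
      have hmD : hmf r l ((true, j) : PapVert (2*(r+l))) = (true, j+1) := hmf_left hj true
      have hmC : hmf r l ((true, j+1) : PapVert (2*(r+l))) = (true, j) := hmf_right hj true
      have hsA : spk r l ((false, j) : PapVert (2*(r+l))) = (true, j) := rfl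
      have hsB : spk r l ((false, j+1) : PapVert (2*(r+l))) = (true, j+1) := rfl
      have hsD : spk r l ((true, j) : PapVert (2*(r+l))) = (false, j) := rfl
      have hsC : spk r l ((true, j+1) : PapVert (2*(r+l))) = (false, j+1) := rfl
      have hfib : S2.filter (fun v => sqi r l v = j) =
          ({(false, j), (false, j+1), (true, j), (true, j+1)} :
            Finset (PapVert (2*(r+l)))).filter (fun v => v ∈ S2) := by
        ext v
        simp only [Finset.mem_filter, Finset.mem_insert, Finset.mem_singleton]
        constructor
        · rintro ⟨hv, hsqv⟩
          refine ⟨?_, hv⟩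
          rcases v with ⟨b, xx⟩
          rcases sqi_vals hsqv with h | h <;> cases b <;> subst h <;> simp
        · rintro ⟨hmem, hv⟩
          refine ⟨hv, ?_⟩
          rcases hmem with rfl | rfl | rfl | rfl
          · exact sqi_left hj false
          · exact sqi_right hj false
          · exact sqi_left hj true
          · exact sqi_right hj true
      rw [hfib, Finset.card_filter]
      rw [Finset.sum_insert (by simp [hjne]), Finset.sum_insert (by simp [hjne]),
        Finset.sum_insert (by simp [hjne]), Finset.sum_singleton]
      by_cases h1 : ((false, j) : PapVert (2*(r+l))) ∈ S2 <;>
        by_cases h2 : ((false, j+1) : PapVert (2*(r+l))) ∈ S2 <;>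
        by_cases h3 : ((true, j) : PapVert (2*(r+l))) ∈ S2 <;>
        by_cases h4 : ((true, j+1) : PapVert (2*(r+l))) ∈ S2
      · simp [h1, h2, h3, h4] <;> decide
      · exact absurd (htriple _ _ _ hsB hmD hmC hsC h2 h3 h4) not_false
      · exact absurd (htriple _ _ _ hsA hmC hmD hsD h1 h4 h3) not_false
      · simp [h1, h2, h3, h4] <;> decide
      · exact absurd (htriple _ _ _ hsC hmA hmB hsB h4 h1 h2) not_false
      · simp [h1, h2, h3, h4] <;> decide
      · simp [h1, h2, h3, h4] <;> decide
      · exact absurd (hsingle _ _ _ _ hmA hsA hmB hsB hmD hsD hmC hsC h1 h2 h3) not_false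
      · exact absurd (htriple _ _ _ hsD hmB hmA hsA h3 h2 h1) not_false
      · simp [h1, h2, h3, h4] <;> decide
      · simp [h1, h2, h3, h4] <;> decide
      · exact absurd (hsingle _ _ _ _ hmB hsB hmA hsA hmC hsC hmD hsD h2 h1 h4) not_false
      · simp [h1, h2, h3, h4] <;> decide
      · exact absurd (hsingle _ _ _ _ hmD hsD hmC hsC hmA hsA hmB hsB h3 h4 h1) not_false
      · exact absurd (hsingle _ _ _ _ hmC hsC hmD hsD hmB hsB hmA hsA h4 h3 h2) not_false
      · simp [h1, h2, h3, h4] <;> decide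
    · -- no vertex has this square index
      have : S2.filter (fun v => sqi r l v = j) = ∅ := by
        apply Finset.filter_eq_empty_iff.mpr
        intro v _ hsqv
        apply hj
        rw [← hsqv]
        exact par_sqi v
      rw [this]
      simp
  have hfibsum : S2.card = ∑ j ∈ (Finset.univ : Finset (ZMod (2*(r+l)))),
      (S2.filter (fun v => sqi r l v = j)).card :=
    Finset.card_eq_sum_card_fiberwise (fun v _ => Finset.mem_univ _)
  have hevenS2 : Even S2.card := by
    rw [hfibsum]
    refine Finset.sum_induction _ Even (fun a b ha hb => ha.add hb) Even.zero ?_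
    intro j _
    exact fiber_even j
  have hfinal : Even VC.card := by
    rw [← hsplit]
    exact hevenS1.add hevenS2
  rw [← hVCcard]
  exact hfinal
end
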